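/- arXiv:2309.01857 — 7 statements merged into one kernel-verified Lean document; each statement's English description precedes it below -/
import Mathlib

section
/- Let F be a graph with chromatic number χ(F) = k+1, where k+1 > r ≥ 2. Then ex_r(n, F^{(r)+}) = ex(n, K_r, F) + O(n^{r−1}); precisely, there is a constant C = C(F, r) such that for every n, ex(n, K_r, F) ≤ ex_r(n, F^{(r)+}) ≤ ex(n, K_r, F) + C·n^{r−1}. -/
open Finset
open scoped Classical

/-- An `r`-uniform hypergraph on vertex type `V`: a finite set of `r`-element
vertex subsets, the hyperedges. -/
structure HyperGraph (V : Type*) (r : ℕ) where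
  edges : Finset (Finset V)
  uniform : ∀ e ∈ edges, e.card = r

namespace HyperGraph

variable {V α : Type*}

/-- A witness that the `r`-graph `G` contains a copy of the `r`-uniform expansion
`F^{(r)+}` of the graph `F`, with core embedding `φ` and, for each edge of `F`, a set
of `r - 2` expansion vertices given by `S`.  The expansion vertices avoid the core and
are pairwise disjoint over distinct edges. -/
def IsExpansionWitness [DecidableEq V] {r : ℕ} (G : HyperGraph V r) (F : SimpleGraph α)
    (φ : α ↪ V) (S : Sym2 α → Finset V) : Prop :=
  (∀ a b, F.Adj a b → (S s(a, b)).card = r - 2) ∧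
  (∀ a b, F.Adj a b → ∀ x ∈ S s(a, b), x ∉ Set.range φ) ∧
  (∀ e ∈ F.edgeSet, ∀ e' ∈ F.edgeSet, e ≠ e' → Disjoint (S e) (S e')) ∧
  (∀ a b, F.Adj a b → insert (φ a) (insert (φ b) (S s(a, b))) ∈ G.edges)

/-- The `r`-graph `G` contains a copy of the expansion `F^{(r)+}` (i.e. a subhypergraph
isomorphic to it). -/
def ContainsExpansion [DecidableEq V] {r : ℕ} (G : HyperGraph V r) (F : SimpleGraph α) : Prop :=
  ∃ φ S, G.IsExpansionWitness F φ S

end HyperGraph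

/-- `ex_r(n, F^{(r)+})`: the maximum number of hyperedges in an `n`-vertex
`F^{(r)+}`-free `r`-graph. -/
noncomputable def exExpansion (r n : ℕ) {α : Type*} (F : SimpleGraph α) : ℕ :=
  sSup {m | ∃ G : HyperGraph (Fin n) r, ¬ G.ContainsExpansion F ∧ G.edges.card = m}

/-- `F` is contained in `G` as a (not necessarily induced) subgraph. -/
def GraphContains {α β : Type*} (F : SimpleGraph α) (G : SimpleGraph β) : Prop :=
  ∃ f : α ↪ β, ∀ a b, F.Adj a b → G.Adj (f a) (f b)

/-- The number of copies of `K_r` (i.e. `r`-cliques) in the graph `G`. -/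
noncomputable def cliqueCount {V : Type*} [Fintype V] (G : SimpleGraph V) (r : ℕ) : ℕ :=
  Nat.card {s : Finset V // G.IsNClique r s}

/-- The generalized Turán number `ex(n, K_r, F)`: the maximum number of `r`-cliques
in an `n`-vertex `F`-free graph. -/
noncomputable def exClique (n r : ℕ) {α : Type*} (F : SimpleGraph α) : ℕ :=
  sSup {m | ∃ G : SimpleGraph (Fin n), ¬ GraphContains F G ∧ cliqueCount G r = m}

/-- The number of copies of the complete `p`-uniform hypergraph `K_r^p` in a `p`-graph `G`:
the number of `r`-element vertex sets all of whose `p`-subsets are hyperedges. -/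
noncomputable def hyperCliqueCount {V : Type*} [Fintype V] {p : ℕ} (G : HyperGraph V p)
    (r : ℕ) : ℕ :=
  Nat.card {R : Finset V // R.card = r ∧ ∀ e ⊆ R, e.card = p → e ∈ G.edges}

/-- `ex_p(n, K_r^p, F^{(p)+})`: the maximum number of copies of `K_r^p` in an `n`-vertex
`F^{(p)+}`-free `p`-graph. -/
noncomputable def exHyperClique (p r n : ℕ) {α : Type*} (F : SimpleGraph α) : ℕ :=
  sSup {m | ∃ G : HyperGraph (Fin n) p, ¬ G.ContainsExpansion F ∧ hyperCliqueCount G r = m}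

/-- `G` contains (a subgraph isomorphic to) a member of the decomposition family `D(F)`:
a bipartite graph obtained from a proper `(k+1)`-coloring of `F` by deleting `k - 1`
color classes. -/
def ContainsDecompMember {α β : Type*} (F : SimpleGraph α) (k : ℕ) (G : SimpleGraph β) : Prop :=
  ∃ c : α → Fin (k + 1), (∀ a b, F.Adj a b → c a ≠ c b) ∧
    ∃ i j : Fin (k + 1), i ≠ j ∧ GraphContains (F.induce {a | c a = i ∨ c a = j}) G

/-- `biex(n, F)`: the maximum number of edges of an `n`-vertex graph containing no member
of the decomposition family `D(F)` (for a graph `F` of chromatic number `k+1`). -/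
noncomputable def biex (n : ℕ) {α : Type*} (F : SimpleGraph α) (k : ℕ) : ℕ :=
  sSup {m | ∃ G : SimpleGraph (Fin n), ¬ ContainsDecompMember F k G ∧ Nat.card G.edgeSet = m}

/-- `t_r(n,k)`: the number of hyperedges of the complete balanced `k`-partite `r`-graph
`T_r(n,k)` (realized on `Fin n` with the balanced partition `v ↦ v % k`). -/
noncomputable def turanHyperCount (r n k : ℕ) : ℕ :=
  Nat.card {e : Finset (Fin n) // e.card = r ∧
    Set.InjOn (fun v : Fin n => v.val % k) ↑e}

/-- `|E(T_r(n,k,i))|`: the number of hyperedges of the `r`-graph obtained from `T_r(n-i,k)`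
by adding `i` new vertices (here the vertices with value `< i`) and all `r`-sets containing
at least one of them. -/
noncomputable def turanPlusCount (r n k i : ℕ) : ℕ :=
  Nat.card {e : Finset (Fin n) // e.card = r ∧
    ((∃ v ∈ e, v.val < i) ∨ Set.InjOn (fun v : Fin n => (v.val - i) % k) ↑e)}

/-- `G` has a color-critical edge: an edge whose deletion decreases the chromatic number. -/
def HasColorCriticalEdge {β : Type*} (G : SimpleGraph β) : Prop :=
  ∃ a b, G.Adj a b ∧ (G.deleteEdges {s(a, b)}).chromaticNumber < G.chromaticNumber

/-- `B_{k+1,1}`: two copies of `K_{k+1}` sharing exactly one vertex (the vertex `k`). -/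
def bowtie (k : ℕ) : SimpleGraph (Fin (2 * k + 1)) :=
  SimpleGraph.fromRel (fun a b => (a.val ≤ k ∧ b.val ≤ k) ∨ (k ≤ a.val ∧ k ≤ b.val))

/-- The `r`-graph `H'(m)` on `n` vertices: a complete `k`-partite `r`-graph with one part
`V_1` of size `m` (the vertices with value `< m`) and `k-1` balanced parts on the remaining
vertices, together with all `r`-sets containing both `u` (the vertex `0`) and `v` (the
vertex `1`), and all `r`-sets containing `u` and `r-1` vertices outside `V_1`. -/
noncomputable def HprimeGraph (r n k m : ℕ) : HyperGraph (Fin n) r :=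
  ⟨Finset.univ.filter (fun e : Finset (Fin n) => e.card = r ∧
      (Set.InjOn (fun v : Fin n => if v.val < m then 0 else (v.val - m) % (k - 1) + 1) ↑e
        ∨ ((∃ a ∈ e, a.val = 0) ∧ (∃ b ∈ e, b.val = 1))
        ∨ ((∃ a ∈ e, a.val = 0) ∧ ∀ w ∈ e, w.val ≠ 0 → m ≤ w.val))),
    fun e he => ((Finset.mem_filter.mp he).2).1⟩

/-- `Δ*(t)G`: the `(r-1)`-graph of `t`-heavy `(r-1)`-sets, i.e. the `(r-1)`-element
vertex sets contained in at least `t` hyperedges of `G`. -/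
noncomputable def shadowOp {V : Type*} [Fintype V] [DecidableEq V] {r : ℕ} (t : ℕ)
    (G : HyperGraph V r) : HyperGraph V (r - 1) :=
  ⟨Finset.univ.filter (fun A : Finset V =>
      A.card = r - 1 ∧ t ≤ (G.edges.filter (fun e => A ⊆ e)).card),
    fun A hA => ((Finset.mem_filter.mp hA).2).1⟩

/-- Iterated shadow operator: `iterShadow t G j = (Δ*(t))^j G`, a `(r-j)`-graph. -/
noncomputable def iterShadow {V : Type*} [Fintype V] [DecidableEq V] (t : ℕ) {r : ℕ}
    (G : HyperGraph V r) : (j : ℕ) → HyperGraph V (r - j)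
  | 0 => G
  | j + 1 => shadowOp t (iterShadow t G j)

/-- A vertex set `A` is `t`-fat with respect to `G`: there are at least `t` hyperedges
of `G` whose pairwise intersections all equal `A`. -/
def TFat {V : Type*} [DecidableEq V] {r : ℕ} (t : ℕ) (G : HyperGraph V r)
    (A : Finset V) : Prop :=
  ∃ E : Finset (Finset V), E ⊆ G.edges ∧ t ≤ E.card ∧
    ∀ e ∈ E, ∀ e' ∈ E, e ≠ e' → e ∩ e' = A

/-- The graph `G(𝒢)` of `t`-fat pairs of the `r`-graph `G`. -/
def fatGraph {V : Type*} [DecidableEq V] {r : ℕ} (t : ℕ) (G : HyperGraph V r) :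
    SimpleGraph V :=
  SimpleGraph.fromRel (fun x y => TFat t G {x, y})

/-- The `i`-graph whose hyperedges are the `t`-fat `i`-element vertex sets of `G`. -/
noncomputable def fatHyper {V : Type*} [Fintype V] [DecidableEq V] {r : ℕ} (t i : ℕ)
    (G : HyperGraph V r) : HyperGraph V i :=
  ⟨Finset.univ.filter (fun A : Finset V => A.card = i ∧ TFat t G A),
    fun A hA => ((Finset.mem_filter.mp hA).2).1⟩

/-- The `r`-graph whose hyperedges are the vertex sets of the `r`-cliques of `G`. -/
noncomputable def cliqueHyper {V : Type*} [Fintype V] (G : SimpleGraph V) (r : ℕ) :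
    HyperGraph V r :=
  ⟨Finset.univ.filter (fun e : Finset V => G.IsNClique r e),
    fun e he => ((Finset.mem_filter.mp he).2).card_eq⟩

/-- The `r`-graph on `n` vertices whose hyperedges are all `r`-sets containing the
fixed vertex `0`. -/
noncomputable def starHyper (n r : ℕ) : HyperGraph (Fin n) r :=
  ⟨Finset.univ.filter (fun e : Finset (Fin n) => e.card = r ∧ ∃ a ∈ e, a.val = 0),
    fun e he => ((Finset.mem_filter.mp he).2).1⟩

/-- `σ(F)`: the minimum size of a color class over all proper `(k+1)`-colorings of `F`. -/
noncomputable def sigmaF {α : Type*} (F : SimpleGraph α) (k : ℕ) : ℕ :=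
  sInf {m | ∃ c : α → Fin (k + 1), (∀ a b, F.Adj a b → c a ≠ c b) ∧
    ∃ i, m = Nat.card {a // c a = i}}

/-- The number of neighbors of `v` (in the graph `G`) lying in the part `i` of the
partition `P`. -/
noncomputable def nbrCount {n k : ℕ} (G : SimpleGraph (Fin n)) (P : Fin n → Fin k)
    (v : Fin n) (i : Fin k) : ℕ :=
  (Finset.univ.filter (fun w => G.Adj v w ∧ P w = i)).card

/-- The size of the part `i` of the partition `P`. -/
noncomputable def partSize {n k : ℕ} (P : Fin n → Fin k) (i : Fin k) : ℕ :=
  (Finset.univ.filter (fun v => P v = i)).card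

/-- Every copy (in the graph `G`) of a member of the decomposition family `D(F)` that lies
inside a single part of the partition `P` has at least two vertices in `B`. -/
def DecompInB {α : Type*} {n k : ℕ} (F : SimpleGraph α) (G : SimpleGraph (Fin n))
    (P : Fin n → Fin k) (B : Finset (Fin n)) : Prop :=
  ∀ c : α → Fin (k + 1), (∀ a b, F.Adj a b → c a ≠ c b) →
    ∀ i j : Fin (k + 1), i ≠ j →
      ∀ ψ : {a : α // c a = i ∨ c a = j} ↪ Fin n,
        (∀ a b : {a : α // c a = i ∨ c a = j}, F.Adj a.1 b.1 → G.Adj (ψ a) (ψ b)) →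
        (∀ a b : {a : α // c a = i ∨ c a = j}, P (ψ a) = P (ψ b)) →
        ∃ a b : {a : α // c a = i ∨ c a = j}, a ≠ b ∧ ψ a ∈ B ∧ ψ b ∈ B

section Aux

variable {α : Type*} [Fintype α] {F : SimpleGraph α} {n r : ℕ}

lemma bddAbove_exExpansionSet (r n : ℕ) (F : SimpleGraph α) :
    BddAbove {m | ∃ G : HyperGraph (Fin n) r, ¬ G.ContainsExpansion F ∧ G.edges.card = m} := by
  refine ⟨Fintype.card (Finset (Fin n)), ?_⟩
  rintro m ⟨G, -, rfl⟩
  exact (Finset.card_le_univ _).trans (le_of_eq (Finset.card_univ))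

lemma bddAbove_exCliqueSet (n r : ℕ) (F : SimpleGraph α) :
    BddAbove {m | ∃ G : SimpleGraph (Fin n), ¬ GraphContains F G ∧ cliqueCount G r = m} := by
  refine ⟨Fintype.card (Finset (Fin n)), ?_⟩
  rintro m ⟨G, -, rfl⟩
  rw [cliqueCount, Nat.card_eq_fintype_card]
  exact Fintype.card_subtype_le _

lemma cliqueCount_eq_filter {V : Type*} [Fintype V] (G : SimpleGraph V) (r : ℕ) :
    cliqueCount G r = (Finset.univ.filter (fun s : Finset V => G.IsNClique r s)).card := by
  rw [cliqueCount, Nat.card_eq_fintype_card, Fintype.card_subtype]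

lemma cliqueCount_le_exClique (G : SimpleGraph (Fin n)) (hG : ¬ GraphContains F G) :
    cliqueCount G r ≤ exClique n r F :=
  le_csSup (bddAbove_exCliqueSet n r F) ⟨G, hG, rfl⟩

lemma cliqueHyper_free (G : SimpleGraph (Fin n)) (hG : ¬ GraphContains F G) :
    ¬ (cliqueHyper G r).ContainsExpansion F := by
  rintro ⟨φ, S, h1, h2, h3, h4⟩
  refine hG ⟨φ, fun a b hab => ?_⟩
  have hmem := h4 a b hab
  rw [cliqueHyper] at hmem
  simp only [Finset.mem_filter, Finset.mem_univ, true_and] at hmem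
  have hne : φ a ≠ φ b := φ.injective.ne hab.ne
  refine hmem.isClique ?_ ?_ hne
  · simp
  · simp

lemma exClique_le_exExpansion (hr : 2 ≤ r) : exClique n r F ≤ exExpansion r n F := by
  refine csSup_le' ?_
  rintro m ⟨G, hG, rfl⟩
  refine le_csSup (bddAbove_exExpansionSet r n F) ⟨cliqueHyper G r, cliqueHyper_free G hG, ?_⟩
  rw [cliqueCount_eq_filter]
  rfl

lemma card_le_cliqueCount {V : Type*} [Fintype V] (G' : SimpleGraph V) (r : ℕ)
    (s : Finset (Finset V)) (hs : ∀ e ∈ s, G'.IsNClique r e) :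
    s.card ≤ cliqueCount G' r := by
  rw [cliqueCount, Nat.card_eq_fintype_card, ← Fintype.card_coe s]
  refine Fintype.card_le_of_injective (fun e => ⟨e.1, hs e.1 e.2⟩) ?_
  intro e e' h
  simp only [Subtype.mk.injEq] at h
  exact Subtype.ext h

lemma upper_r2 (G : HyperGraph (Fin n) 2) (hG : ¬ G.ContainsExpansion F) :
    G.edges.card ≤ exClique n 2 F := by
  set G' : SimpleGraph (Fin n) :=
    { Adj := fun x y => x ≠ y ∧ ({x, y} : Finset (Fin n)) ∈ G.edges
      symm := by
        constructor
        rintro x y ⟨h1, h2⟩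
        exact ⟨h1.symm, by rwa [Finset.pair_comm]⟩
      loopless := ⟨fun x ⟨h1, _⟩ => h1 rfl⟩ } with hG'
  have hfree : ¬ GraphContains F G' := by
    rintro ⟨f, hf⟩
    refine hG ⟨f, fun _ => ∅, fun a b hab => by simp, fun a b hab => by simp, ?_, ?_⟩
    · intro e he e' he' hne
      simp
    · intro a b hab
      simpa using (hf a b hab).2
  have hclique : ∀ e ∈ G.edges, G'.IsNClique 2 e := by
    intro e he
    have hcard := G.uniform e he
    constructor
    · intro x hx y hy hne
      have hpair : ({x, y} : Finset (Fin n)) = e := by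
        apply Finset.eq_of_subset_of_card_le
        · intro z hz
          rcases Finset.mem_insert.mp hz with rfl | hz
          · exact hx
          · exact (Finset.mem_singleton.mp hz) ▸ hy
        · rw [hcard, Finset.card_pair hne]
      exact ⟨hne, hpair ▸ he⟩
    · exact hcard
  exact (card_le_cliqueCount G' 2 G.edges hclique).trans (cliqueCount_le_exClique G' hfree)


lemma fatGraph_free {t : ℕ}
    (ht : Fintype.card α + (r - 2) * Fintype.card (Sym2 α) + 2 ≤ t)
    (G : HyperGraph (Fin n) r) (hG : ¬ G.ContainsExpansion F) :
    ¬ GraphContains F (fatGraph t G) := by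
  rintro ⟨f, hf⟩
  have key : ∀ E : Finset (Sym2 α), E ⊆ F.edgeFinset →
      ∃ S : Sym2 α → Finset (Fin n),
        (∀ e, e ∉ E → S e = ∅) ∧
        (∀ e ∈ E, (S e).card = r - 2 ∧
          (∀ x ∈ S e, x ∉ Set.range f) ∧
          (∀ e' ∈ E, e ≠ e' → Disjoint (S e) (S e')) ∧
          (∀ a b, s(a, b) = e → F.Adj a b →
            insert (f a) (insert (f b) (S e)) ∈ G.edges)) := by
    intro E
    induction E using Finset.induction_on with
    | empty =>
      exact fun _ => ⟨fun _ => ∅, fun _ _ => rfl, fun e he => absurd he (Finset.notMem_empty e)⟩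
    | @insert e0 E' hnot ih =>
      intro hsub
      have he0 : e0 ∈ F.edgeFinset := hsub (Finset.mem_insert_self _ _)
      have hsub' : E' ⊆ F.edgeFinset := fun x hx => hsub (Finset.mem_insert_of_mem hx)
      obtain ⟨S', hS0, hS⟩ := ih hsub'
      obtain ⟨a, b, rfl⟩ : ∃ a b, e0 = s(a, b) := by
        induction e0 using Sym2.ind with | _ x y => exact ⟨x, y, rfl⟩
      have hab : F.Adj a b := by
        rw [SimpleGraph.mem_edgeFinset, SimpleGraph.mem_edgeSet] at he0
        exact he0
      have hadjfat := hf a b hab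
      rw [fatGraph, SimpleGraph.fromRel_adj] at hadjfat
      obtain ⟨hfab, hfat⟩ := hadjfat
      have hfat' : TFat t G {f a, f b} := by
        rcases hfat with h | h
        · exact h
        · rwa [Finset.pair_comm]
      obtain ⟨𝓔, hEsub, hEcard, hEint⟩ := hfat'
      set W : Finset (Fin n) := Finset.univ.image f ∪ E'.biUnion S' with hW
      have hWcard : W.card + 2 ≤ t := by
        have h1 : (Finset.univ.image f).card ≤ Fintype.card α :=
          le_trans Finset.card_image_le (le_of_eq Finset.card_univ)
        have h2 : (E'.biUnion S').card ≤ (r - 2) * Fintype.card (Sym2 α) := by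
          calc (E'.biUnion S').card ≤ ∑ e ∈ E', (S' e).card := Finset.card_biUnion_le
            _ ≤ ∑ _e ∈ E', (r - 2) := Finset.sum_le_sum (fun e he => le_of_eq ((hS e he).1))
            _ = E'.card * (r - 2) := by rw [Finset.sum_const, smul_eq_mul]
            _ ≤ Fintype.card (Sym2 α) * (r - 2) :=
                Nat.mul_le_mul_right _ (le_trans (Finset.card_le_univ _) (le_of_eq Finset.card_univ))
            _ = (r - 2) * Fintype.card (Sym2 α) := Nat.mul_comm _ _
        have h3 : W.card ≤ (Finset.univ.image f).card + (E'.biUnion S').card :=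
          Finset.card_union_le _ _
        omega
      set Bad := 𝓔.filter
        (fun ed => ∃ w ∈ W, w ∈ ed ∧ w ∉ ({f a, f b} : Finset (Fin n))) with hBadDef
      have hBadcard : Bad.card ≤ W.card := by
        have hchoice : ∀ ed ∈ Bad,
            ∃ w, w ∈ W ∧ w ∈ ed ∧ w ∉ ({f a, f b} : Finset (Fin n)) := by
          intro ed hed
          simpa using (Finset.mem_filter.mp hed).2
        set g : Finset (Fin n) → Fin n := fun ed =>
          if h : ∃ w, w ∈ W ∧ w ∈ ed ∧ w ∉ ({f a, f b} : Finset (Fin n)) then h.choose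
          else f a with hg
        have hgspec : ∀ ed ∈ Bad,
            g ed ∈ W ∧ g ed ∈ ed ∧ g ed ∉ ({f a, f b} : Finset (Fin n)) := by
          intro ed hed
          have hex := hchoice ed hed
          rw [hg]
          simp only [dif_pos hex]
          exact hex.choose_spec
        refine Finset.card_le_card_of_injOn g (fun ed hed => (hgspec ed hed).1) ?_
        intro ed hed ed' hed' hgg
        by_contra hne
        have h1 := hgspec ed hed
        have h2 := hgspec ed' hed'
        have hmem : g ed ∈ ed ∩ ed' :=
          Finset.mem_inter.mpr ⟨h1.2.1, hgg ▸ h2.2.1⟩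
        rw [hEint ed (Finset.mem_of_mem_filter ed hed) ed' (Finset.mem_of_mem_filter ed' hed')
          hne] at hmem
        exact h1.2.2 hmem
      have hBadlt : Bad.card < 𝓔.card := by
        have : W.card < t := by omega
        omega
      obtain ⟨ed, hedE, hedBad⟩ := Finset.not_subset.mp
        (fun hsub2 => absurd (Finset.card_le_card hsub2) (not_le.mpr hBadlt))
      have h2le : 1 < 𝓔.card := by omega
      obtain ⟨ed', hed'E, hne'⟩ := Finset.exists_mem_ne h2le ed
      have hint := hEint ed' hed'E ed hedE hne'
      have hfa : f a ∈ ed := by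
        have : f a ∈ ed' ∩ ed := by rw [hint]; simp
        exact (Finset.mem_inter.mp this).2
      have hfb : f b ∈ ed := by
        have : f b ∈ ed' ∩ ed := by rw [hint]; simp
        exact (Finset.mem_inter.mp this).2
      have hclean : ∀ w ∈ W, w ∈ ed → w ∈ ({f a, f b} : Finset (Fin n)) := by
        intro w hw hwed
        by_contra hcon
        exact hedBad (Finset.mem_filter.mpr ⟨hedE, ⟨w, hw, hwed, hcon⟩⟩)
      have hpairsub : ({f a, f b} : Finset (Fin n)) ⊆ ed := by
        intro z hz
        rcases Finset.mem_insert.mp hz with rfl | hz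
        · exact hfa
        · exact (Finset.mem_singleton.mp hz) ▸ hfb
      have hinsert : insert (f a) (insert (f b) (ed \ {f a, f b})) = ed := by
        ext x
        simp only [Finset.mem_insert, Finset.mem_sdiff, Finset.mem_singleton]
        constructor
        · rintro (rfl | rfl | ⟨hx, -⟩)
          · exact hfa
          · exact hfb
          · exact hx
        · intro hx
          by_cases h1 : x = f a
          · exact Or.inl h1
          by_cases h2 : x = f b
          · exact Or.inr (Or.inl h2)
          · exact Or.inr (Or.inr ⟨hx, by simp [h1, h2]⟩)
      refine ⟨fun e => if e = s(a, b) then ed \ {f a, f b} else S' e, ?_, ?_⟩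
      · intro e he
        have hne1 : e ≠ s(a, b) := fun h => he (h ▸ Finset.mem_insert_self _ _)
        have hne2 : e ∉ E' := fun h => he (Finset.mem_insert_of_mem h)
        beta_reduce
        rw [if_neg hne1]
        exact hS0 e hne2
      · intro e he
        rcases Finset.mem_insert.mp he with rfl | heE'
        · beta_reduce
          rw [if_pos rfl]
          refine ⟨?_, ?_, ?_, ?_⟩
          · rw [Finset.card_sdiff_of_subset hpairsub, Finset.card_pair hfab, G.uniform ed (hEsub hedE)]
          · intro x hx hxrange
            obtain ⟨c, hc⟩ := hxrange
            have hxW : x ∈ W :=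
              Finset.mem_union_left _ (Finset.mem_image.mpr ⟨c, Finset.mem_univ c, hc⟩)
            exact (Finset.mem_sdiff.mp hx).2 (hclean x hxW (Finset.mem_sdiff.mp hx).1)
          · intro e' he' hnee
            rcases Finset.mem_insert.mp he' with rfl | he'E
            · exact absurd rfl hnee
            · have hne2 : e' ≠ s(a, b) := fun h => hnot (h ▸ he'E)
              rw [if_neg hne2, Finset.disjoint_left]
              intro x hx hx'
              have hxW : x ∈ W :=
                Finset.mem_union_right _ (Finset.mem_biUnion.mpr ⟨e', he'E, hx'⟩)
              exact (Finset.mem_sdiff.mp hx).2 (hclean x hxW (Finset.mem_sdiff.mp hx).1)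
          · intro a' b' heq hadj'
            have hset : insert (f a') (insert (f b') (ed \ {f a, f b})) = ed := by
              rcases Sym2.eq_iff.mp heq with ⟨rfl, rfl⟩ | ⟨rfl, rfl⟩
              · exact hinsert
              · rw [Finset.insert_comm]
                exact hinsert
            rw [hset]
            exact hEsub hedE
        · have hnee : e ≠ s(a, b) := fun h => hnot (h ▸ heE')
          beta_reduce
          rw [if_neg hnee]
          obtain ⟨hc1, hc2, hc3, hc4⟩ := hS e heE'
          refine ⟨hc1, hc2, ?_, hc4⟩
          intro e' he' hne2
          rcases Finset.mem_insert.mp he' with rfl | he'E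
          · rw [if_pos rfl, Finset.disjoint_right]
            intro x hx hx'
            have hxW : x ∈ W :=
              Finset.mem_union_right _ (Finset.mem_biUnion.mpr ⟨e, heE', hx'⟩)
            exact (Finset.mem_sdiff.mp hx).2 (hclean x hxW (Finset.mem_sdiff.mp hx).1)
          · have hne3 : e' ≠ s(a, b) := fun h => hnot (h ▸ he'E)
            rw [if_neg hne3]
            exact hc3 e' he'E hne2
  obtain ⟨S, hS0, hS⟩ := key F.edgeFinset (subset_refl _)
  have hmemE : ∀ {a b : α}, F.Adj a b → s(a, b) ∈ F.edgeFinset := fun h =>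
    SimpleGraph.mem_edgeFinset.mpr (F.mem_edgeSet.mpr h)
  apply hG
  refine ⟨f, S, ?_, ?_, ?_, ?_⟩
  · intro a b hab
    exact (hS _ (hmemE hab)).1
  · intro a b hab x hx
    exact (hS _ (hmemE hab)).2.1 x hx
  · intro e he e' he' hne
    exact (hS e (SimpleGraph.mem_edgeFinset.mpr he)).2.2.1 e'
      (SimpleGraph.mem_edgeFinset.mpr he') hne
  · intro a b hab
    exact (hS _ (hmemE hab)).2.2.2 a b rfl hab


lemma triple_count (G : HyperGraph (Fin n) r) (x y w : Fin n)
    (hxy : x ≠ y) (hxw : x ≠ w) (hyw : y ≠ w) :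
    (G.edges.filter (fun e => x ∈ e ∧ y ∈ e ∧ w ∈ e)).card ≤ n ^ (r - 3) := by
  have hc3 : ({x, y, w} : Finset (Fin n)).card = 3 := by
    rw [Finset.card_insert_of_notMem (by simp [hxy, hxw]), Finset.card_pair hyw]
  have hmap : ∀ e ∈ G.edges.filter (fun e => x ∈ e ∧ y ∈ e ∧ w ∈ e),
      e \ {x, y, w} ∈ Finset.powersetCard (r - 3) Finset.univ := by
    intro e he
    rw [Finset.mem_filter] at he
    obtain ⟨hee, hx, hy, hw⟩ := he
    rw [Finset.mem_powersetCard]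
    refine ⟨Finset.subset_univ _, ?_⟩
    rw [Finset.card_sdiff_of_subset (by
      intro z hz
      rcases Finset.mem_insert.mp hz with rfl | hz
      · exact hx
      rcases Finset.mem_insert.mp hz with rfl | hz
      · exact hy
      · exact (Finset.mem_singleton.mp hz) ▸ hw), G.uniform e hee, hc3]
  have hsubset : ∀ e ∈ G.edges.filter (fun e => x ∈ e ∧ y ∈ e ∧ w ∈ e),
      ({x, y, w} : Finset (Fin n)) ⊆ e := by
    intro e he
    rw [Finset.mem_filter] at he
    intro z hz
    rcases Finset.mem_insert.mp hz with rfl | hz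
    · exact he.2.1
    rcases Finset.mem_insert.mp hz with rfl | hz
    · exact he.2.2.1
    · exact (Finset.mem_singleton.mp hz) ▸ he.2.2.2
  calc (G.edges.filter (fun e => x ∈ e ∧ y ∈ e ∧ w ∈ e)).card
      ≤ (Finset.powersetCard (r - 3) (Finset.univ : Finset (Fin n))).card := by
        refine Finset.card_le_card_of_injOn (fun e => e \ {x, y, w}) hmap ?_
        intro e he e' he' heq
        have h1 := Finset.sdiff_union_of_subset (hsubset e he)
        have h2 := Finset.sdiff_union_of_subset (hsubset e' he')
        rw [← h1, ← h2]
        simp only at heq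
        rw [heq]
    _ = n.choose (r - 3) := by
        rw [Finset.card_powersetCard, Finset.card_univ, Fintype.card_fin]
    _ ≤ n ^ (r - 3) := Nat.choose_le_pow n (r - 3)

lemma nonfat_count {t : ℕ} (ht : 1 ≤ t) (G : HyperGraph (Fin n) r) (x y : Fin n)
    (hxy : x ≠ y) (hnf : ¬ TFat t G {x, y}) :
    (G.edges.filter (fun e => x ∈ e ∧ y ∈ e)).card ≤ t + t * r * n ^ (r - 3) := by
  set D := G.edges.filter (fun e => x ∈ e ∧ y ∈ e) with hD
  have hmemD : ∀ z ∈ D, z ∈ G.edges ∧ x ∈ z ∧ y ∈ z := fun z hz => by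
    have := Finset.mem_filter.mp hz
    exact ⟨this.1, this.2⟩
  set P := D.powerset.filter
    (fun E => ∀ e ∈ E, ∀ e' ∈ E, e ≠ e' → e ∩ e' = ({x, y} : Finset (Fin n))) with hP
  have hPne : P.Nonempty := ⟨∅, by simp [hP]⟩
  obtain ⟨Emax, hEmaxP, hmax⟩ := Finset.exists_max_image P Finset.card hPne
  rw [hP, Finset.mem_filter, Finset.mem_powerset] at hEmaxP
  obtain ⟨hEmaxD, hEmaxInt⟩ := hEmaxP
  have hEmaxcard : Emax.card < t := by
    by_contra hle
    push_neg at hle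
    exact hnf ⟨Emax, fun e he => (hmemD e (hEmaxD he)).1, hle, hEmaxInt⟩
  set Wxy := Emax.biUnion id with hW
  have hWcard : Wxy.card ≤ (t - 1) * r := by
    calc Wxy.card ≤ ∑ e ∈ Emax, (id e).card := Finset.card_biUnion_le
      _ ≤ ∑ _e ∈ Emax, r :=
          Finset.sum_le_sum (fun e he => le_of_eq (G.uniform e (hmemD e (hEmaxD he)).1))
      _ = Emax.card * r := by rw [Finset.sum_const, smul_eq_mul]
      _ ≤ (t - 1) * r := Nat.mul_le_mul_right _ (by omega)
  have hcover : D ⊆ Emax ∪ (Wxy \ {x, y}).biUnion (fun w => D.filter (fun e => w ∈ e)) := by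
    intro e heD
    by_cases heE : e ∈ Emax
    · exact Finset.mem_union_left _ heE
    · have hwit : ∃ e' ∈ Emax, ∃ w ∈ e ∩ e', w ∉ ({x, y} : Finset (Fin n)) := by
        by_contra hcon
        push_neg at hcon
        have hkey : ∀ u ∈ Emax, e ∩ u = ({x, y} : Finset (Fin n)) := by
          intro u hu
          apply Finset.Subset.antisymm
          · intro w hw
            exact hcon u hu w hw
          · intro w hw
            have h1 := hmemD e heD
            have h2 := hmemD u (hEmaxD hu)
            rcases Finset.mem_insert.mp hw with rfl | hw
            · exact Finset.mem_inter.mpr ⟨h1.2.1, h2.2.1⟩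
            · rw [Finset.mem_singleton] at hw
              subst hw
              exact Finset.mem_inter.mpr ⟨h1.2.2, h2.2.2⟩
        have hins : insert e Emax ∈ P := by
          rw [hP, Finset.mem_filter, Finset.mem_powerset]
          constructor
          · intro z hz
            rcases Finset.mem_insert.mp hz with rfl | hz
            · exact heD
            · exact hEmaxD hz
          · intro z hz z' hz' hne
            rcases Finset.mem_insert.mp hz with h1 | h1 <;>
              rcases Finset.mem_insert.mp hz' with h2 | h2
            · exact absurd (h1.trans h2.symm) hne
            · rw [h1]
              exact hkey z' h2
            · rw [h2, Finset.inter_comm]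
              exact hkey z h1
            · exact hEmaxInt z h1 z' h2 hne
        have := hmax _ hins
        rw [Finset.card_insert_of_notMem heE] at this
        omega
      obtain ⟨e', he', w, hw, hwxy⟩ := hwit
      refine Finset.mem_union_right _ (Finset.mem_biUnion.mpr ⟨w, ?_,
        Finset.mem_filter.mpr ⟨heD, (Finset.mem_inter.mp hw).1⟩⟩)
      exact Finset.mem_sdiff.mpr
        ⟨Finset.mem_biUnion.mpr ⟨e', he', (Finset.mem_inter.mp hw).2⟩, hwxy⟩
  calc D.card ≤ _ := Finset.card_le_card hcover
    _ ≤ Emax.card + ((Wxy \ {x, y}).biUnion (fun w => D.filter (fun e => w ∈ e))).card :=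
        Finset.card_union_le _ _
    _ ≤ Emax.card + ∑ w ∈ Wxy \ {x, y}, (D.filter (fun e => w ∈ e)).card :=
        Nat.add_le_add_left Finset.card_biUnion_le _
    _ ≤ t + ∑ _w ∈ Wxy \ {x, y}, n ^ (r - 3) := by
        refine Nat.add_le_add (by omega) (Finset.sum_le_sum ?_)
        intro w hw
        rw [Finset.mem_sdiff] at hw
        have hwx : x ≠ w := fun h => hw.2 (by simp [h])
        have hwy : y ≠ w := fun h => hw.2 (by simp [h])
        have hsub2 : D.filter (fun e => w ∈ e) ⊆
            G.edges.filter (fun e => x ∈ e ∧ y ∈ e ∧ w ∈ e) := by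
          intro e he
          rw [Finset.mem_filter] at he
          obtain ⟨heD, hwe⟩ := he
          obtain ⟨hge, hxe, hye⟩ := hmemD e heD
          exact Finset.mem_filter.mpr ⟨hge, hxe, hye, hwe⟩
        exact le_trans (Finset.card_le_card hsub2) (triple_count G x y w hxy hwx hwy)
    _ = t + (Wxy \ {x, y}).card * n ^ (r - 3) := by rw [Finset.sum_const, smul_eq_mul]
    _ ≤ t + t * r * n ^ (r - 3) := by
        refine Nat.add_le_add_left (Nat.mul_le_mul_right _ ?_) _
        calc (Wxy \ {x, y}).card ≤ Wxy.card := Finset.card_le_card (Finset.sdiff_subset)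
          _ ≤ (t - 1) * r := hWcard
          _ ≤ t * r := Nat.mul_le_mul_right _ (Nat.sub_le t 1)

lemma upper_r3 {t : ℕ} (hr3 : 3 ≤ r)
    (ht : Fintype.card α + (r - 2) * Fintype.card (Sym2 α) + 2 ≤ t)
    (G : HyperGraph (Fin n) r) (hG : ¬ G.ContainsExpansion F) :
    G.edges.card ≤ exClique n r F + (t + t * r) * n ^ (r - 1) := by
  have ht1 : 1 ≤ t := by omega
  rcases Nat.eq_zero_or_pos n with rfl | hn
  · have hemp : G.edges = ∅ := by
      rw [Finset.eq_empty_iff_forall_notMem]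
      intro e he
      have h1 := G.uniform e he
      have h2 : e = ∅ := Finset.eq_empty_of_isEmpty e
      rw [h2, Finset.card_empty] at h1
      omega
    rw [hemp, Finset.card_empty]
    exact Nat.zero_le _
  set Good := G.edges.filter (fun e => ∀ x ∈ e, ∀ y ∈ e, x ≠ y → TFat t G {x, y}) with hGood
  set Bad := G.edges.filter (fun e => ¬ ∀ x ∈ e, ∀ y ∈ e, x ≠ y → TFat t G {x, y}) with hBad
  have hsplit : Good.card + Bad.card = G.edges.card :=
    Finset.card_filter_add_card_filter_not _
  have hgood : Good.card ≤ exClique n r F := by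
    have hcl : ∀ e ∈ Good, (fatGraph t G).IsNClique r e := by
      intro e he
      rw [hGood, Finset.mem_filter] at he
      constructor
      · intro x hx y hy hne
        rw [fatGraph, SimpleGraph.fromRel_adj]
        exact ⟨hne, Or.inl (he.2 x hx y hy hne)⟩
      · exact G.uniform e he.1
    exact le_trans (card_le_cliqueCount _ r Good hcl)
      (cliqueCount_le_exClique _ (fatGraph_free ht G hG))
  have hbad : Bad.card ≤ (t + t * r) * n ^ (r - 1) := by
    have hcover : Bad ⊆ (Finset.univ : Finset (Fin n × Fin n)).biUnion
        (fun p => if p.1 ≠ p.2 ∧ ¬ TFat t G {p.1, p.2}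
          then G.edges.filter (fun e => p.1 ∈ e ∧ p.2 ∈ e) else ∅) := by
      intro e he
      rw [hBad, Finset.mem_filter] at he
      obtain ⟨heG, hw⟩ := he
      push_neg at hw
      obtain ⟨x, hx, y, hy, hne, hnf⟩ := hw
      refine Finset.mem_biUnion.mpr ⟨(x, y), Finset.mem_univ _, ?_⟩
      rw [if_pos ⟨hne, hnf⟩]
      exact Finset.mem_filter.mpr ⟨heG, hx, hy⟩
    have harith : n * n * (t + t * r * n ^ (r - 3)) ≤ (t + t * r) * n ^ (r - 1) := by
      have e2 : n * n * n ^ (r - 3) = n ^ (r - 1) := by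
        have : 2 + (r - 3) = r - 1 := by omega
        calc n * n * n ^ (r - 3) = n ^ (2 + (r - 3)) := by ring
          _ = n ^ (r - 1) := by rw [this]
      have e3 : n * n ≤ n ^ (r - 1) := by
        calc n * n = n ^ 2 := (sq n).symm
          _ ≤ n ^ (r - 1) := Nat.pow_le_pow_right hn (by omega)
      calc n * n * (t + t * r * n ^ (r - 3))
          = t * (n * n) + t * r * (n * n * n ^ (r - 3)) := by ring
        _ ≤ t * n ^ (r - 1) + t * r * n ^ (r - 1) := by
            rw [e2]
            exact Nat.add_le_add_right (Nat.mul_le_mul_left _ e3) _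
        _ = (t + t * r) * n ^ (r - 1) := by ring
    calc Bad.card ≤ _ := Finset.card_le_card hcover
      _ ≤ ∑ p ∈ (Finset.univ : Finset (Fin n × Fin n)),
          (if p.1 ≠ p.2 ∧ ¬ TFat t G {p.1, p.2}
            then G.edges.filter (fun e => p.1 ∈ e ∧ p.2 ∈ e) else ∅).card :=
          Finset.card_biUnion_le
      _ ≤ ∑ _p ∈ (Finset.univ : Finset (Fin n × Fin n)), (t + t * r * n ^ (r - 3)) := by
          refine Finset.sum_le_sum ?_
          intro p _
          split_ifs with h
          · exact nonfat_count ht1 G p.1 p.2 h.1 h.2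
          · simp only [Finset.card_empty]
            exact Nat.zero_le _
      _ = n * n * (t + t * r * n ^ (r - 3)) := by
          rw [Finset.sum_const, smul_eq_mul, Finset.card_univ, Fintype.card_prod,
            Fintype.card_fin]
      _ ≤ (t + t * r) * n ^ (r - 1) := harith
  omega

end Aux

/-- If `χ(F) = k+1 > r ≥ 2`, then
`ex(n, K_r, F) ≤ ex_r(n, F^{(r)+}) ≤ ex(n, K_r, F) + C n^{r-1}` for a constant `C = C(F,r)`. -/
theorem statement_0 {α : Type*} [Fintype α] (F : SimpleGraph α) (k r : ℕ)
    (hr : 2 ≤ r) (hkr : r < k + 1)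
    (hchi : F.chromaticNumber = (k : ℕ∞) + 1) :
    ∃ C : ℕ, ∀ n : ℕ,
      exClique n r F ≤ exExpansion r n F ∧
      exExpansion r n F ≤ exClique n r F + C * n ^ (r - 1) := by
  set t := Fintype.card α + (r - 2) * Fintype.card (Sym2 α) + 2 with htdef
  refine ⟨t + t * r, fun n => ⟨exClique_le_exExpansion hr, ?_⟩⟩
  refine csSup_le' ?_
  rintro m ⟨G, hG, rfl⟩
  rcases Nat.lt_or_ge r 3 with h2 | h3
  · have hr2 : r = 2 := by omega
    subst hr2
    exact le_trans (upper_r2 G hG) (Nat.le_add_right _ _)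
  · exact upper_r3 h3 (le_refl t) G hG
end

section
/- Let F be a graph with chromatic number χ(F) = k+1, where k+1 > r, and let 2 ≤ p ≤ r. Then ex_r(n, F^{(r)+}) = ex_p(n, K_r^p, F^{(p)+}) + O(n^{r−1}); precisely, there is a constant C = C(F, r, p) such that for every n, |ex_r(n, F^{(r)+}) − ex_p(n, K_r^p, F^{(p)+})| ≤ C·n^{r−1}. -/
open Finset
open scoped Classical

lemma count_eq {n p r : ℕ} (G : HyperGraph (Fin n) p) :
    hyperCliqueCount G r = (univ.filter (fun R : Finset (Fin n) =>
      R.card = r ∧ ∀ e ⊆ R, e.card = p → e ∈ G.edges)).card := by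
  rw [hyperCliqueCount, Nat.card_eq_fintype_card, Fintype.card_subtype]

lemma superset_count {n r : ℕ} (H : HyperGraph (Fin n) r) (B : Finset (Fin n)) :
    (H.edges.filter (fun e => B ⊆ e)).card ≤ n.choose (r - B.card) := by
  have h1 : (H.edges.filter (fun e => B ⊆ e)).card ≤
      (Finset.univ.powersetCard (r - B.card) : Finset (Finset (Fin n))).card := by
    apply Finset.card_le_card_of_injOn (fun e => e \ B)
    · intro e he
      simp only [mem_coe, mem_filter] at he
      simp only [mem_coe, Finset.mem_powersetCard]
      exact ⟨Finset.subset_univ _, by rw [Finset.card_sdiff_of_subset he.2, H.uniform e he.1]⟩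
    · intro e he e' he' h
      simp only [mem_coe, mem_filter] at he he'
      simp only at h
      have h2 : e \ B ∪ B = e' \ B ∪ B := by rw [h]
      rwa [Finset.sdiff_union_of_subset he.2, Finset.sdiff_union_of_subset he'.2] at h2
  simpa [Finset.card_powersetCard] using h1

lemma link_count {n p r t : ℕ} (hpr : p < r) (H : HyperGraph (Fin n) r)
    (A : Finset (Fin n)) (hA : A.card = p) (hfat : ¬ TFat t H A) :
    (H.edges.filter (fun e => A ⊆ e)).card ≤ t + t * r * n ^ (r - p - 1) := by
  set E₀ := H.edges.filter (fun e => A ⊆ e) with hE₀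
  set 𝒞 := E₀.powerset.filter (fun E => ∀ e ∈ E, ∀ e' ∈ E, e ≠ e' → e ∩ e' = A) with h𝒞
  have hne : 𝒞.Nonempty := ⟨∅, by simp [h𝒞]⟩
  obtain ⟨E, hE𝒞, hmax⟩ := Finset.exists_max_image 𝒞 Finset.card hne
  simp only [h𝒞, mem_filter, Finset.mem_powerset] at hE𝒞
  obtain ⟨hEsub, hEpair⟩ := hE𝒞
  -- |E| < t
  have hEcard : E.card < t := by
    by_contra hc
    exact hfat ⟨E, hEsub.trans (Finset.filter_subset _ _), le_of_not_gt hc, hEpair⟩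
  set W := E.biUnion (fun e => e \ A) with hW
  have hWcard : W.card ≤ E.card * r := by
    calc W.card ≤ ∑ e ∈ E, (e \ A).card := Finset.card_biUnion_le
    _ ≤ E.card * r := by
        apply Finset.sum_le_card_nsmul
        intro e he
        have he0 := hEsub he
        rw [hE₀, mem_filter] at he0
        calc (e \ A).card ≤ e.card := Finset.card_le_card Finset.sdiff_subset
        _ = r := H.uniform e he0.1
  -- every member of E₀ is in E or meets W
  have hcover : E₀ ⊆ E ∪ W.biUnion (fun w => E₀.filter (fun e => w ∈ e)) := by
    intro e he
    by_cases heE : e ∈ E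
    · exact Finset.mem_union_left _ heE
    have he' := he
    rw [hE₀, mem_filter] at he'
    have : ∃ e' ∈ E, ¬ Disjoint (e \ A) (e' \ A) := by
      by_contra hc
      push_neg at hc
      have hins : insert e E ∈ 𝒞 := by
        rw [h𝒞, mem_filter, Finset.mem_powerset]
        constructor
        · exact Finset.insert_subset he hEsub
        · intro f hf f' hf' hne
          rcases Finset.mem_insert.mp hf with rfl | hfE <;>
            rcases Finset.mem_insert.mp hf' with rfl | hf'E
          · exact absurd rfl hne
          · -- f = e, f' ∈ E
            have hA1 : A ⊆ f' := by
              have := hEsub hf'E; rw [hE₀, mem_filter] at this; exact this.2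
            apply Finset.Subset.antisymm
            · intro x hx
              rw [Finset.mem_inter] at hx
              by_contra hxA
              exact Finset.disjoint_left.mp (hc f' hf'E)
                (Finset.mem_sdiff.mpr ⟨hx.1, hxA⟩) (Finset.mem_sdiff.mpr ⟨hx.2, hxA⟩)
            · exact Finset.subset_inter he'.2 hA1
          · have hA1 : A ⊆ f := by
              have := hEsub hfE; rw [hE₀, mem_filter] at this; exact this.2
            apply Finset.Subset.antisymm
            · intro x hx
              rw [Finset.mem_inter] at hx
              by_contra hxA
              exact Finset.disjoint_left.mp (hc f hfE)
                (Finset.mem_sdiff.mpr ⟨hx.2, hxA⟩) (Finset.mem_sdiff.mpr ⟨hx.1, hxA⟩)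
            · exact Finset.subset_inter hA1 he'.2
          · exact hEpair f hfE f' hf'E hne
      have := hmax _ hins
      rw [Finset.card_insert_of_notMem heE] at this
      omega
    obtain ⟨e', he'E, hnd⟩ := this
    rw [Finset.not_disjoint_iff] at hnd
    obtain ⟨w, hw1, hw2⟩ := hnd
    apply Finset.mem_union_right
    apply Finset.mem_biUnion.mpr
    refine ⟨w, Finset.mem_biUnion.mpr ⟨e', he'E, hw2⟩, ?_⟩
    rw [mem_filter]
    exact ⟨he, (Finset.mem_sdiff.mp hw1).1⟩
  -- count
  have hfiltcount : ∀ w ∈ W, (E₀.filter (fun e => w ∈ e)).card ≤ n ^ (r - p - 1) := by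
    intro w hw
    obtain ⟨e', _, hw'⟩ := Finset.mem_biUnion.mp hw
    have hwA : w ∉ A := (Finset.mem_sdiff.mp hw').2
    have hsub : E₀.filter (fun e => w ∈ e) ⊆
        H.edges.filter (fun e => insert w A ⊆ e) := by
      intro e he
      rw [mem_filter] at he ⊢
      have := he.1; rw [hE₀, mem_filter] at this
      exact ⟨this.1, Finset.insert_subset he.2 this.2⟩
    calc (E₀.filter (fun e => w ∈ e)).card
        ≤ (H.edges.filter (fun e => insert w A ⊆ e)).card := Finset.card_le_card hsub
      _ ≤ n.choose (r - (insert w A).card) := superset_count H _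
      _ ≤ n ^ (r - p - 1) := by
          rw [Finset.card_insert_of_notMem hwA, hA]
          have : r - (p + 1) = r - p - 1 := by omega
          rw [this]
          exact Nat.choose_le_pow _ _
  calc E₀.card ≤ (E ∪ W.biUnion (fun w => E₀.filter (fun e => w ∈ e))).card :=
        Finset.card_le_card hcover
    _ ≤ E.card + (W.biUnion (fun w => E₀.filter (fun e => w ∈ e))).card :=
        Finset.card_union_le _ _
    _ ≤ E.card + ∑ w ∈ W, (E₀.filter (fun e => w ∈ e)).card :=
        Nat.add_le_add_left Finset.card_biUnion_le _
    _ ≤ E.card + W.card * n ^ (r - p - 1) :=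
        Nat.add_le_add_left (Finset.sum_le_card_nsmul _ _ _ hfiltcount) _
    _ ≤ t + t * r * n ^ (r - p - 1) := by
        have h1 : W.card ≤ t * r := le_trans hWcard (Nat.mul_le_mul_right r (le_of_lt hEcard))
        have := Nat.mul_le_mul_right (n ^ (r - p - 1)) h1
        omega

lemma pow_le_pow_exp {n a b : ℕ} (ha : 0 < a) (hab : a ≤ b) : n ^ a ≤ n ^ b := by
  rcases Nat.eq_zero_or_pos n with rfl | hn
  · rw [Nat.zero_pow (by omega), Nat.zero_pow (by omega)]
  · exact Nat.pow_le_pow_right hn hab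

lemma split_count {n p r t : ℕ} (hp : 2 ≤ p) (hpr : p < r) (H : HyperGraph (Fin n) r) :
    H.edges.card ≤ hyperCliqueCount (fatHyper t p H) r + (t + t * r) * n ^ (r - 1) := by
  classical
  set P : Finset (Fin n) → Prop :=
    fun e => ∀ A ⊆ e, A.card = p → A ∈ (fatHyper t p H).edges with hP
  have hsplit := Finset.card_filter_add_card_filter_not (s := H.edges) (p := P)
  have hgood : (H.edges.filter P).card ≤ hyperCliqueCount (fatHyper t p H) r := by
    rw [count_eq]
    apply Finset.card_le_card
    intro e he
    rw [mem_filter] at he ⊢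
    exact ⟨Finset.mem_univ _, H.uniform e he.1, he.2⟩
  have hbad : (H.edges.filter (fun e => ¬ P e)).card ≤ (t + t * r) * n ^ (r - 1) := by
    have hsub : H.edges.filter (fun e => ¬ P e) ⊆
        ((univ.powersetCard p).filter (fun A : Finset (Fin n) => ¬ TFat t H A)).biUnion
          (fun A => H.edges.filter (fun e => A ⊆ e)) := by
      intro e he
      rw [mem_filter] at he
      obtain ⟨heH, hnP⟩ := he
      have hnP' : ∃ A, A ⊆ e ∧ A.card = p ∧ A ∉ (fatHyper t p H).edges := by
        by_contra hc
        push_neg at hc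
        exact hnP (fun A hA h2 => hc A hA h2)
      obtain ⟨A, hAe, hAcard, hAnot⟩ := hnP'
      have hnfat : ¬ TFat t H A := by
        intro hf
        exact hAnot (Finset.mem_filter.mpr ⟨Finset.mem_univ _, hAcard, hf⟩)
      apply Finset.mem_biUnion.mpr
      refine ⟨A, ?_, ?_⟩
      · rw [mem_filter, Finset.mem_powersetCard]
        exact ⟨⟨Finset.subset_univ _, hAcard⟩, hnfat⟩
      · rw [mem_filter]; exact ⟨heH, hAe⟩
    calc (H.edges.filter (fun e => ¬ P e)).card
        ≤ ∑ A ∈ (univ.powersetCard p).filter (fun A : Finset (Fin n) => ¬ TFat t H A),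
            (H.edges.filter (fun e => A ⊆ e)).card :=
          le_trans (Finset.card_le_card hsub) Finset.card_biUnion_le
      _ ≤ ((univ.powersetCard p).filter (fun A : Finset (Fin n) => ¬ TFat t H A)).card *
            (t + t * r * n ^ (r - p - 1)) := by
          apply Finset.sum_le_card_nsmul
          intro A hA
          rw [mem_filter, Finset.mem_powersetCard] at hA
          exact link_count hpr H A hA.1.2 hA.2
      _ ≤ n ^ p * (t + t * r * n ^ (r - p - 1)) := by
          apply Nat.mul_le_mul_right
          calc ((univ.powersetCard p).filter (fun A : Finset (Fin n) => ¬ TFat t H A)).card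
              ≤ (univ.powersetCard p : Finset (Finset (Fin n))).card :=
                Finset.card_le_card (Finset.filter_subset _ _)
            _ = n.choose p := by rw [Finset.card_powersetCard, Finset.card_univ, Fintype.card_fin]
            _ ≤ n ^ p := Nat.choose_le_pow _ _
      _ ≤ (t + t * r) * n ^ (r - 1) := by
          rw [Nat.mul_add, Nat.add_mul]
          apply Nat.add_le_add
          · rw [Nat.mul_comm]
            exact Nat.mul_le_mul_left t (pow_le_pow_exp (by omega) (by omega))
          · have : n ^ p * (t * r * n ^ (r - p - 1)) = t * r * (n ^ p * n ^ (r - p - 1)) := by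
              ring
            rw [this, ← pow_add]
            have he : p + (r - p - 1) = r - 1 := by omega
            rw [he]
  omega

lemma fatHyper_free {α : Type*} [Fintype α] {n p r t : ℕ} (hp : 2 ≤ p) (hpr : p ≤ r)
    (F : SimpleGraph α) (H : HyperGraph (Fin n) r)
    (ht : Fintype.card α + 2 * (Fintype.card (Sym2 α) * r) + 2 ≤ t)
    (hH : ¬ H.ContainsExpansion F) :
    ¬ (fatHyper t p H).ContainsExpansion F := by
  rintro ⟨φ, S, h1, h2, h3, h4⟩
  apply hH
  -- the 2-core map A
  set A : Sym2 α → Finset (Fin n) := fun g =>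
    if h : ∃ a b, F.Adj a b ∧ g = s(a, b) then
      insert (φ h.choose) (insert (φ h.choose_spec.choose) (S g)) else ∅ with hAdef
  have hA' : ∀ g, (∃ a b, F.Adj a b ∧ g = s(a, b)) →
      ∃ a b, F.Adj a b ∧ g = s(a, b) ∧ A g = insert (φ a) (insert (φ b) (S g)) := by
    intro g hex
    rw [hAdef]
    simp only [dif_pos hex]
    exact ⟨hex.choose, hex.choose_spec.choose, hex.choose_spec.choose_spec.1,
      hex.choose_spec.choose_spec.2, rfl⟩
  have hA : ∀ a b, F.Adj a b → A s(a, b) = insert (φ a) (insert (φ b) (S s(a, b))) := by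
    intro a b hab
    obtain ⟨a', b', hadj', heq', hAeq⟩ := hA' s(a, b) ⟨a, b, hab, rfl⟩
    rw [hAeq]
    rcases (Sym2.eq_iff.mp heq') with ⟨ha, hb⟩ | ⟨ha, hb⟩
    · rw [ha, hb]
    · rw [ha, hb]
      exact Finset.insert_comm _ _ _
  have hSA : ∀ a b, F.Adj a b → S s(a, b) ⊆ A s(a, b) := by
    intro a b hab
    rw [hA a b hab]
    exact (Finset.subset_insert _ _).trans (Finset.subset_insert _ _)
  have hAcard : ∀ a b, F.Adj a b → (A s(a, b)).card = p := by
    intro a b hab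
    have hbS : φ b ∉ S s(a, b) := fun hmem => h2 a b hab _ hmem ⟨b, rfl⟩
    have haS : φ a ∉ insert (φ b) (S s(a, b)) := by
      rw [Finset.mem_insert]
      rintro (heq | hmem)
      · exact hab.ne (φ.injective heq)
      · exact h2 a b hab _ hmem ⟨a, rfl⟩
    rw [hA a b hab, Finset.card_insert_of_notMem haS, Finset.card_insert_of_notMem hbS,
      h1 a b hab]
    omega
  have hAG : ∀ g ∈ F.edgeFinset, (A g).card = p ∧ TFat t H (A g) := by
    intro g hg
    induction g using Sym2.ind with
    | _ a b =>
      rw [SimpleGraph.mem_edgeFinset, SimpleGraph.mem_edgeSet] at hg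
      have := h4 a b hg
      rw [← hA a b hg] at this
      have := Finset.mem_filter.mp this
      exact this.2
  -- candidate families
  set C : Sym2 α → Finset (Finset (Fin n)) := fun g =>
    if h : TFat t H (A g) then h.choose else ∅ with hCdef
  have hC : ∀ g ∈ F.edgeFinset, C g ⊆ H.edges ∧ t ≤ (C g).card ∧
      ∀ e ∈ C g, ∀ e' ∈ C g, e ≠ e' → e ∩ e' = A g := by
    intro g hg
    have hfat := (hAG g hg).2
    rw [hCdef]
    simp only [dif_pos hfat]
    exact hfat.choose_spec
  have ht2 : 2 ≤ t := by omega
  have hCsub : ∀ g ∈ F.edgeFinset, ∀ e ∈ C g, A g ⊆ e := by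
    intro g hg e he
    obtain ⟨hsub, hcard, hpair⟩ := hC g hg
    obtain ⟨e', he', hne⟩ := Finset.exists_mem_ne (s := C g) (by omega) e
    rw [← hpair e' he' e he hne]
    exact Finset.inter_subset_right
  -- base forbidden set
  set Z0 : Finset (Fin n) := (univ.image φ) ∪ F.edgeFinset.biUnion S with hZ0def
  have hZ0card : Z0.card ≤ Fintype.card α + Fintype.card (Sym2 α) * r := by
    calc Z0.card ≤ (univ.image φ).card + (F.edgeFinset.biUnion S).card :=
          Finset.card_union_le _ _
      _ ≤ Fintype.card α + Fintype.card (Sym2 α) * r := by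
        apply Nat.add_le_add
        · exact le_trans Finset.card_image_le (le_of_eq Finset.card_univ)
        · calc (F.edgeFinset.biUnion S).card ≤ ∑ g ∈ F.edgeFinset, (S g).card :=
              Finset.card_biUnion_le
            _ ≤ F.edgeFinset.card * r := by
                apply Finset.sum_le_card_nsmul
                intro g hg
                induction g using Sym2.ind with
                | _ a b =>
                  rw [SimpleGraph.mem_edgeFinset, SimpleGraph.mem_edgeSet] at hg
                  rw [h1 a b hg]; omega
            _ ≤ Fintype.card (Sym2 α) * r := by
                apply Nat.mul_le_mul_right
                exact le_trans (Finset.card_le_univ _) (le_of_eq Finset.card_univ)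
  -- greedy selection
  have key : ∀ s : Finset (Sym2 α), s ⊆ F.edgeFinset → ∃ χ : Sym2 α → Finset (Fin n),
      (∀ g ∈ s, χ g ∈ C g) ∧ (∀ g ∈ s, Disjoint (χ g \ A g) Z0) ∧
      (∀ g ∈ s, ∀ g' ∈ s, g ≠ g' → Disjoint (χ g \ A g) (χ g' \ A g')) := by
    intro s
    induction s using Finset.induction_on with
    | empty => exact fun _ => ⟨fun _ => ∅, by simp, by simp, by simp⟩
    | @insert g s hgs ih =>
      intro hins
      have hgF : g ∈ F.edgeFinset := hins (Finset.mem_insert_self _ _)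
      obtain ⟨χ, hc1, hc2, hc3⟩ := ih ((Finset.subset_insert _ _).trans hins)
      set Z : Finset (Fin n) := Z0 ∪ s.biUnion (fun g' => χ g' \ A g') with hZdef
      have hZcard : Z.card ≤ t - 2 := by
        calc Z.card ≤ Z0.card + (s.biUnion (fun g' => χ g' \ A g')).card :=
              Finset.card_union_le _ _
          _ ≤ (Fintype.card α + Fintype.card (Sym2 α) * r) + Fintype.card (Sym2 α) * r := by
              apply Nat.add_le_add hZ0card
              calc (s.biUnion (fun g' => χ g' \ A g')).card
                  ≤ ∑ g' ∈ s, (χ g' \ A g').card := Finset.card_biUnion_le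
                _ ≤ s.card * r := by
                    apply Finset.sum_le_card_nsmul
                    intro g' hg'
                    have hmem := hc1 g' hg'
                    have hedge := (hC g' (((Finset.subset_insert _ _).trans hins) hg')).1 hmem
                    calc (χ g' \ A g').card ≤ (χ g').card :=
                          Finset.card_le_card Finset.sdiff_subset
                      _ = r := H.uniform _ hedge
                _ ≤ Fintype.card (Sym2 α) * r := by
                    apply Nat.mul_le_mul_right
                    exact le_trans (Finset.card_le_univ _) (le_of_eq Finset.card_univ)
          _ ≤ t - 2 := by omega
      -- find a candidate avoiding Z
      have hmeet : ((C g).filter (fun e => ¬ Disjoint (e \ A g) Z)).card ≤ Z.card := by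
        have hsub : (C g).filter (fun e => ¬ Disjoint (e \ A g) Z) ⊆
            Z.biUnion (fun z => (C g).filter (fun e => z ∈ e \ A g)) := by
          intro e he
          rw [mem_filter] at he
          rw [Finset.not_disjoint_iff] at he
          obtain ⟨z, hz1, hz2⟩ := he.2
          exact Finset.mem_biUnion.mpr ⟨z, hz2, Finset.mem_filter.mpr ⟨he.1, hz1⟩⟩
        calc ((C g).filter (fun e => ¬ Disjoint (e \ A g) Z)).card
            ≤ ∑ z ∈ Z, ((C g).filter (fun e => z ∈ e \ A g)).card :=
              le_trans (Finset.card_le_card hsub) Finset.card_biUnion_le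
          _ ≤ Z.card * 1 := by
              apply Finset.sum_le_card_nsmul
              intro z hz
              rw [Finset.card_le_one]
              intro e he e' he'
              rw [mem_filter] at he he'
              by_contra hne
              have := (hC g hgF).2.2 e he.1 e' he'.1 hne
              have hz1 := Finset.mem_sdiff.mp he.2
              have hz2 := Finset.mem_sdiff.mp he'.2
              have : z ∈ A g := by
                rw [← this]; exact Finset.mem_inter.mpr ⟨hz1.1, hz2.1⟩
              exact hz1.2 this
          _ = Z.card := Nat.mul_one _
      have hex : ∃ e ∈ C g, Disjoint (e \ A g) Z := by
        by_contra hc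
        push_neg at hc
        have : C g = (C g).filter (fun e => ¬ Disjoint (e \ A g) Z) := by
          symm
          apply Finset.filter_true_of_mem
          intro e he
          exact hc e he
        have hcd := (hC g hgF).2.1
        rw [this] at hcd
        have := le_trans hcd hmeet
        omega
      obtain ⟨e, heC, heZ⟩ := hex
      refine ⟨Function.update χ g e, ?_, ?_, ?_⟩
      · intro g' hg'
        rcases Finset.mem_insert.mp hg' with rfl | hg'
        · rw [Function.update_self]; exact heC
        · rw [Function.update_of_ne (ne_of_mem_of_not_mem hg' hgs)]; exact hc1 g' hg'
      · intro g' hg'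
        rcases Finset.mem_insert.mp hg' with rfl | hg'
        · rw [Function.update_self]
          exact Finset.disjoint_of_subset_right (Finset.subset_union_left) heZ
        · rw [Function.update_of_ne (ne_of_mem_of_not_mem hg' hgs)]; exact hc2 g' hg'
      · intro g1 hg1 g2 hg2 hne
        have hkey : ∀ g' ∈ s, Disjoint (e \ A g) (χ g' \ A g') := by
          intro g' hg'
          apply Finset.disjoint_of_subset_right _ heZ
          exact Finset.Subset.trans
            (Finset.subset_biUnion_of_mem (fun g'' => χ g'' \ A g'') hg')
            Finset.subset_union_right
        rcases Finset.mem_insert.mp hg1 with h1' | h1'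
        · rcases Finset.mem_insert.mp hg2 with h2' | h2'
          · exact absurd (h1'.trans h2'.symm) hne
          · rw [h1', Function.update_self,
              Function.update_of_ne (ne_of_mem_of_not_mem h2' hgs)]
            exact hkey g2 h2'
        · rcases Finset.mem_insert.mp hg2 with h2' | h2'
          · rw [h2', Function.update_self,
              Function.update_of_ne (ne_of_mem_of_not_mem h1' hgs)]
            exact (hkey g1 h1').symm
          · rw [Function.update_of_ne (ne_of_mem_of_not_mem h1' hgs),
              Function.update_of_ne (ne_of_mem_of_not_mem h2' hgs)]
            exact hc3 g1 h1' g2 h2' hne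
  obtain ⟨χ, hk1, hk2, hk3⟩ := key F.edgeFinset (Finset.Subset.refl _)
  -- build the witness for H
  refine ⟨φ, fun g => S g ∪ (χ g \ A g), ?_, ?_, ?_, ?_⟩
  · intro a b hab
    have hgF : s(a, b) ∈ F.edgeFinset := by
      rw [SimpleGraph.mem_edgeFinset, SimpleGraph.mem_edgeSet]; exact hab
    have hdisj : Disjoint (S s(a, b)) (χ s(a, b) \ A s(a, b)) := by
      apply Finset.disjoint_of_subset_left (hSA a b hab)
      exact Finset.disjoint_sdiff
    rw [Finset.card_union_of_disjoint hdisj, h1 a b hab]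
    have hAsub : A s(a, b) ⊆ χ s(a, b) := hCsub _ hgF _ (hk1 _ hgF)
    rw [Finset.card_sdiff_of_subset hAsub, H.uniform _ ((hC _ hgF).1 (hk1 _ hgF)), hAcard a b hab]
    omega
  · intro a b hab x hx
    have hgF : s(a, b) ∈ F.edgeFinset := by
      rw [SimpleGraph.mem_edgeFinset, SimpleGraph.mem_edgeSet]; exact hab
    rcases Finset.mem_union.mp hx with hx | hx
    · exact h2 a b hab x hx
    · rintro ⟨c, rfl⟩
      have : φ c ∈ Z0 := Finset.mem_union_left _ (Finset.mem_image.mpr ⟨c, Finset.mem_univ _, rfl⟩)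
      exact Finset.disjoint_left.mp (hk2 _ hgF) hx this
  · intro g hg g' hg' hne
    rw [← SimpleGraph.mem_edgeFinset] at hg hg'
    have hSS : Disjoint (S g) (S g') :=
      h3 g (SimpleGraph.mem_edgeFinset.mp hg) g' (SimpleGraph.mem_edgeFinset.mp hg') hne
    have hXS : Disjoint (χ g \ A g) (S g') := by
      apply Finset.disjoint_of_subset_right _ (hk2 g hg)
      exact (Finset.subset_biUnion_of_mem S hg').trans Finset.subset_union_right
    have hSX : Disjoint (S g) (χ g' \ A g') := by
      apply Disjoint.symm
      apply Finset.disjoint_of_subset_right _ (hk2 g' hg')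
      exact (Finset.subset_biUnion_of_mem S hg).trans Finset.subset_union_right
    have hXX := hk3 g hg g' hg' hne
    simp only [Finset.disjoint_union_left, Finset.disjoint_union_right]
    tauto
  · intro a b hab
    have hgF : s(a, b) ∈ F.edgeFinset := by
      rw [SimpleGraph.mem_edgeFinset, SimpleGraph.mem_edgeSet]; exact hab
    have hAsub : A s(a, b) ⊆ χ s(a, b) := hCsub _ hgF _ (hk1 _ hgF)
    have heq : insert (φ a) (insert (φ b) (S s(a, b) ∪ (χ s(a, b) \ A s(a, b)))) = χ s(a, b) := by
      have h5 : insert (φ a) (insert (φ b) (S s(a, b) ∪ (χ s(a, b) \ A s(a, b)))) =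
          A s(a, b) ∪ (χ s(a, b) \ A s(a, b)) := by
        rw [hA a b hab]
        ext x
        simp only [Finset.mem_insert, Finset.mem_union]
        tauto
      rw [h5, Finset.union_sdiff_of_subset hAsub]
    rw [heq]
    exact (hC _ hgF).1 (hk1 _ hgF)

noncomputable def cliqueRGraph {n : ℕ} (p r : ℕ) (G : HyperGraph (Fin n) p) :
    HyperGraph (Fin n) r :=
  ⟨univ.filter (fun R : Finset (Fin n) => R.card = r ∧ ∀ e ⊆ R, e.card = p → e ∈ G.edges),
    fun e he => ((Finset.mem_filter.mp he).2).1⟩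

lemma cliqueRGraph_card {n : ℕ} (p r : ℕ) (G : HyperGraph (Fin n) p) :
    (cliqueRGraph p r G).edges.card = hyperCliqueCount G r := (count_eq G).symm

lemma cliqueRGraph_free {α : Type*} {n p r : ℕ} (hp : 2 ≤ p) (hpr : p ≤ r)
    (F : SimpleGraph α) (G : HyperGraph (Fin n) p) (hG : ¬ G.ContainsExpansion F) :
    ¬ (cliqueRGraph p r G).ContainsExpansion F := by
  rintro ⟨φ, S, h1, h2, h3, h4⟩
  apply hG
  set S' : Sym2 α → Finset (Fin n) := fun g =>
    if h : p - 2 ≤ (S g).card then (Finset.exists_subset_card_eq h).choose else ∅ with hS'def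
  have hS'sub : ∀ g, S' g ⊆ S g := by
    intro g
    rw [hS'def]
    by_cases h : p - 2 ≤ (S g).card
    · simp only [dif_pos h]
      exact (Finset.exists_subset_card_eq h).choose_spec.1
    · simp only [dif_neg h]
      exact Finset.empty_subset _
  have hS'card : ∀ a b, F.Adj a b → (S' s(a, b)).card = p - 2 := by
    intro a b hab
    have hle : p - 2 ≤ (S s(a, b)).card := by rw [h1 a b hab]; omega
    rw [hS'def]
    simp only [dif_pos hle]
    exact (Finset.exists_subset_card_eq hle).choose_spec.2
  refine ⟨φ, S', hS'card, ?_, ?_, ?_⟩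
  · intro a b hab x hx
    exact h2 a b hab x (hS'sub _ hx)
  · intro g hg g' hg' hne
    exact Finset.disjoint_of_subset_left (hS'sub g)
      (Finset.disjoint_of_subset_right (hS'sub g') (h3 g hg g' hg' hne))
  · intro a b hab
    have hmem := h4 a b hab
    rw [cliqueRGraph] at hmem
    simp only [Finset.mem_filter] at hmem
    obtain ⟨-, hcard, hall⟩ := hmem
    apply hall
    · exact Finset.insert_subset_insert _ (Finset.insert_subset_insert _ (hS'sub _))
    · have hbS : φ b ∉ S' s(a, b) := fun hmem =>
        h2 a b hab _ (hS'sub _ hmem) ⟨b, rfl⟩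
      have haS : φ a ∉ insert (φ b) (S' s(a, b)) := by
        rw [Finset.mem_insert]
        rintro (heq | hmem)
        · exact hab.ne (φ.injective heq)
        · exact h2 a b hab _ (hS'sub _ hmem) ⟨a, rfl⟩
      rw [Finset.card_insert_of_notMem haS, Finset.card_insert_of_notMem hbS,
        hS'card a b hab]
      omega

lemma count_self {n r : ℕ} (H : HyperGraph (Fin n) r) :
    hyperCliqueCount H r = H.edges.card := by
  rw [count_eq]
  congr 1
  ext e
  rw [Finset.mem_filter]
  constructor
  · rintro ⟨-, hcard, hall⟩
    exact hall e (Finset.Subset.refl _) hcard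
  · intro he
    refine ⟨Finset.mem_univ _, H.uniform e he, fun f hf hcard => ?_⟩
    rwa [Finset.eq_of_subset_of_card_le hf (le_of_eq ((H.uniform e he).trans hcard.symm))]

lemma bdd_exp {α : Type*} (F : SimpleGraph α) (r n : ℕ) :
    BddAbove {m | ∃ G : HyperGraph (Fin n) r, ¬ G.ContainsExpansion F ∧ G.edges.card = m} := by
  refine ⟨Fintype.card (Finset (Fin n)), ?_⟩
  rintro m ⟨G, -, rfl⟩
  exact le_trans (Finset.card_le_univ _) (le_of_eq Finset.card_univ)

lemma bdd_hc {α : Type*} (F : SimpleGraph α) (p r n : ℕ) :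
    BddAbove {m | ∃ G : HyperGraph (Fin n) p, ¬ G.ContainsExpansion F ∧
      hyperCliqueCount G r = m} := by
  refine ⟨Fintype.card (Finset (Fin n)), ?_⟩
  rintro m ⟨G, -, rfl⟩
  rw [count_eq]
  exact le_trans (Finset.card_le_univ _) (le_of_eq Finset.card_univ)

lemma empty_not_contains {α : Type*} {n r : ℕ} (F : SimpleGraph α)
    (hadj : ∃ a b, F.Adj a b) :
    ¬ (⟨∅, fun e he => absurd he (Finset.notMem_empty e)⟩ :
        HyperGraph (Fin n) r).ContainsExpansion F := by
  rintro ⟨φ, S, -, -, -, h4⟩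
  obtain ⟨a, b, hab⟩ := hadj
  exact Finset.notMem_empty _ (h4 a b hab)

lemma nonempty_exp {α : Type*} (F : SimpleGraph α) (hadj : ∃ a b, F.Adj a b) (r n : ℕ) :
    Set.Nonempty {m | ∃ G : HyperGraph (Fin n) r,
      ¬ G.ContainsExpansion F ∧ G.edges.card = m} :=
  ⟨0, ⟨⟨∅, fun e he => absurd he (Finset.notMem_empty e)⟩,
    empty_not_contains F hadj, Finset.card_empty⟩⟩

lemma nonempty_hc {α : Type*} (F : SimpleGraph α) (hadj : ∃ a b, F.Adj a b)
    {p r : ℕ} (hp : 0 < p) (hpr : p ≤ r) (n : ℕ) :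
    Set.Nonempty {m | ∃ G : HyperGraph (Fin n) p,
      ¬ G.ContainsExpansion F ∧ hyperCliqueCount G r = m} := by
  refine ⟨0, ⟨⟨∅, fun e he => absurd he (Finset.notMem_empty e)⟩,
    empty_not_contains F hadj, ?_⟩⟩
  rw [count_eq]
  convert Finset.card_empty
  rw [Finset.filter_eq_empty_iff]
  rintro R - ⟨hcard, hall⟩
  obtain ⟨f, hf, hfcard⟩ := Finset.exists_subset_card_eq (show p ≤ R.card by omega)
  exact Finset.notMem_empty f (hall f hf hfcard)

/-- If `χ(F) = k+1 > r` and `2 ≤ p ≤ r`, then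
`|ex_r(n, F^{(r)+}) − ex_p(n, K_r^p, F^{(p)+})| ≤ C n^{r−1}` for a constant `C = C(F,r,p)`. -/
theorem statement_1 {α : Type*} [Fintype α] (F : SimpleGraph α) (k r p : ℕ)
    (hp : 2 ≤ p) (hpr : p ≤ r) (hkr : r < k + 1)
    (hchi : F.chromaticNumber = (k : ℕ∞) + 1) :
    ∃ C : ℕ, ∀ n : ℕ,
      exExpansion r n F ≤ exHyperClique p r n F + C * n ^ (r - 1) ∧
      exHyperClique p r n F ≤ exExpansion r n F + C * n ^ (r - 1) := by

  have hadj : ∃ a b, F.Adj a b := by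
    by_contra hc
    push_neg at hc
    have hcol : F.Colorable 1 := ⟨⟨fun _ => 0, fun {a b} hab => absurd hab (hc a b)⟩⟩
    have hle := hcol.chromaticNumber_le
    rw [hchi] at hle
    have : ((k + 1 : ℕ) : ℕ∞) ≤ ((1 : ℕ) : ℕ∞) := by
      rw [Nat.cast_add, Nat.cast_one] at *
      exact_mod_cast hle
    rw [Nat.cast_le] at this
    omega
  set t := Fintype.card α + 2 * (Fintype.card (Sym2 α) * r) + 2 with htdef
  refine ⟨t + t * r, fun n => ⟨?_, ?_⟩⟩
  · -- exExpansion ≤ exHyperClique + C n^(r-1)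
    apply csSup_le (nonempty_exp F hadj r n)
    rintro m ⟨H, hfree, rfl⟩
    rcases eq_or_lt_of_le hpr with rfl | hlt
    · have : H.edges.card ≤ exHyperClique p p n F := by
        apply le_csSup (bdd_hc F p p n)
        exact ⟨H, hfree, count_self H⟩
      omega
    · have hfat := fatHyper_free hp hpr F H (le_of_eq htdef.symm) hfree
      have hsplit := split_count (t := t) hp hlt H
      have hle : hyperCliqueCount (fatHyper t p H) r ≤ exHyperClique p r n F :=
        le_csSup (bdd_hc F p r n) ⟨fatHyper t p H, hfat, rfl⟩
      omega
  · -- exHyperClique ≤ exExpansion + ...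
    have h1 : exHyperClique p r n F ≤ exExpansion r n F := by
      apply csSup_le (nonempty_hc F hadj (by omega) hpr n)
      rintro m ⟨G, hfree, rfl⟩
      apply le_csSup (bdd_exp F r n)
      exact ⟨cliqueRGraph p r G, cliqueRGraph_free hp hpr F G hfree, cliqueRGraph_card p r G⟩
    exact le_trans h1 (Nat.le_add_right _ _)
end

section
/- Let r ≥ 3, let F be a graph, let H be an F^{(r)+}-free r-graph, and let t ≥ (r−2)|E(F)| + |V(F)|. Then the (r−1)-graph Δ*(t)H is F^{(r−1)+}-free. -/
open Finset
open scoped Classical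

/-- If `r ≥ 3`, `G` is `F^{(r)+}`-free and
`t ≥ (r−2)|E(F)| + |V(F)|`, then `Δ*(t)G` is `F^{(r−1)+}`-free. -/
theorem statement_5 {α V : Type*} [Fintype α] [Fintype V] [DecidableEq V]
    (F : SimpleGraph α) (r t : ℕ) (hr : 3 ≤ r)
    (ht : (r - 2) * Nat.card F.edgeSet + Fintype.card α ≤ t)
    (G : HyperGraph V r) (hG : ¬ G.ContainsExpansion F) :
    ¬ (shadowOp t G).ContainsExpansion F := by
  classical
  rintro ⟨φ, S, h1, h2, h3, h4⟩
  apply hG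
  set E := F.edgeFinset with hE
  have hcardE : Nat.card F.edgeSet = E.card := by
    simp [hE, SimpleGraph.edgeFinset, Nat.card_coe_set_eq,
      Set.ncard_eq_toFinset_card']
  have hsym : ∀ a b : α, (insert (φ a) (insert (φ b) (S s(a,b))) : Finset V)
      = insert (φ b) (insert (φ a) (S s(b,a))) := by
    intro a b
    rw [Sym2.eq_swap, Finset.insert_comm]
  set A : Sym2 α → Finset V :=
    Sym2.lift ⟨fun a b => insert (φ a) (insert (φ b) (S s(a,b))), hsym⟩ with hA
  have hAdef : ∀ a b : α, A s(a,b) = insert (φ a) (insert (φ b) (S s(a,b))) := by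
    intro a b; simp [hA]
  -- membership of A q in the shadow, for edges
  have hAmem : ∀ q ∈ E, (A q).card = r - 1 ∧
      t ≤ (G.edges.filter (fun e => A q ⊆ e)).card := by
    intro q
    induction q using Sym2.ind with
    | _ a b =>
      intro hq
      have hadj : F.Adj a b := by
        rw [hE, SimpleGraph.mem_edgeFinset, SimpleGraph.mem_edgeSet] at hq
        exact hq
      have := h4 a b hadj
      rw [← hAdef a b] at this
      simpa [shadowOp] using this
  set cand : Sym2 α → Finset V :=
    fun q => (G.edges.filter (fun e => A q ⊆ e)).biUnion (fun e => e \ A q) with hcand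
  -- each candidate extends A q to an edge of G
  have hcandmem : ∀ q ∈ E, ∀ v ∈ cand q, insert v (A q) ∈ G.edges ∧ v ∉ A q := by
    intro q hq v hv
    rw [hcand] at hv
    simp only [Finset.mem_biUnion, Finset.mem_filter, Finset.mem_sdiff] at hv
    obtain ⟨e, ⟨he, hAe⟩, hve, hvA⟩ := hv
    refine ⟨?_, hvA⟩
    have hsub : insert v (A q) ⊆ e := Finset.insert_subset hve hAe
    have hcards : e.card ≤ (insert v (A q)).card := by
      rw [Finset.card_insert_of_notMem hvA, (hAmem q hq).1, G.uniform e he]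
      omega
    rwa [Finset.eq_of_subset_of_card_le hsub hcards]
  -- candidate sets are large
  have hcandcard : ∀ q ∈ E, t ≤ (cand q).card := by
    intro q hq
    have hdisj : ∀ e₁ ∈ G.edges.filter (fun e => A q ⊆ e),
        ∀ e₂ ∈ G.edges.filter (fun e => A q ⊆ e), e₁ ≠ e₂ →
        Disjoint (e₁ \ A q) (e₂ \ A q) := by
      intro e₁ h₁ e₂ h₂ hne
      rw [Finset.disjoint_left]
      intro v hv1 hv2
      simp only [Finset.mem_filter] at h₁ h₂
      rw [Finset.mem_sdiff] at hv1 hv2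
      apply hne
      have he1 : e₁ = insert v (A q) := by
        refine (Finset.eq_of_subset_of_card_le (Finset.insert_subset hv1.1 h₁.2) ?_).symm
        rw [Finset.card_insert_of_notMem hv1.2, (hAmem q hq).1, G.uniform e₁ h₁.1]
        omega
      have he2 : e₂ = insert v (A q) := by
        refine (Finset.eq_of_subset_of_card_le (Finset.insert_subset hv2.1 h₂.2) ?_).symm
        rw [Finset.card_insert_of_notMem hv2.2, (hAmem q hq).1, G.uniform e₂ h₂.1]
        omega
      rw [he1, he2]
    rw [hcand]
    rw [Finset.card_biUnion hdisj]
    calc t ≤ (G.edges.filter (fun e => A q ⊆ e)).card := (hAmem q hq).2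
      _ = ∑ e ∈ G.edges.filter (fun e => A q ⊆ e), 1 := by simp
      _ ≤ ∑ e ∈ G.edges.filter (fun e => A q ⊆ e), (e \ A q).card := by
          apply Finset.sum_le_sum
          intro e he
          simp only [Finset.mem_filter] at he
          rw [Finset.card_sdiff_of_subset he.2, (hAmem q hq).1, G.uniform e he.1]
          omega
  -- sizes of S q
  have hScard : ∀ q ∈ E, (S q).card = r - 3 := by
    intro q
    induction q using Sym2.ind with
    | _ a b =>
      intro hq
      have hadj : F.Adj a b := by
        rw [hE, SimpleGraph.mem_edgeFinset, SimpleGraph.mem_edgeSet] at hq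
        exact hq
      have := h1 a b hadj
      omega
  set B0 : Finset V := (Finset.univ.image φ) ∪ E.biUnion S with hB0
  have hB0card : B0.card ≤ Fintype.card α + (r - 3) * E.card := by
    calc B0.card ≤ (Finset.univ.image φ).card + (E.biUnion S).card :=
          Finset.card_union_le _ _
      _ ≤ Fintype.card α + (r - 3) * E.card := by
          gcongr
          · exact (Finset.card_image_le).trans (by simp)
          · calc (E.biUnion S).card ≤ ∑ q ∈ E, (S q).card := Finset.card_biUnion_le
              _ = ∑ q ∈ E, (r - 3) := Finset.sum_congr rfl hScard
              _ = E.card * (r - 3) := by rw [Finset.sum_const, smul_eq_mul]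
              _ = (r - 3) * E.card := Nat.mul_comm _ _
  -- greedy choice
  have greedy : ∀ T : Finset (Sym2 α), T ⊆ E → ∃ x : Sym2 α → Finset V,
      (∀ q, q ∉ T → x q = ∅) ∧
      (∀ q ∈ T, ∃ v, x q = {v} ∧ v ∈ cand q ∧ v ∉ B0) ∧
      (∀ q ∈ T, ∀ q' ∈ T, q ≠ q' → Disjoint (x q) (x q')) := by
    intro T
    induction T using Finset.induction_on with
    | empty =>
      intro _
      exact ⟨fun _ => ∅, fun _ _ => rfl, fun q hq => absurd hq (Finset.notMem_empty q),
        fun q hq => absurd hq (Finset.notMem_empty q)⟩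
    | insert _ _ hqT ih =>
      rename_i q T
      intro hsub
      have hqE : q ∈ E := hsub (Finset.mem_insert_self q T)
      have hTE : T ⊆ E := fun z hz => hsub (Finset.mem_insert_of_mem hz)
      obtain ⟨x, hx0, hx1, hx2⟩ := ih hTE
      -- bad set
      set bad : Finset V := B0 ∪ T.biUnion x with hbad
      have hbadcard : bad.card < t := by
        have hTcard : T.card < E.card := Finset.card_lt_card
          (Finset.ssubset_iff_of_subset hTE |>.mpr ⟨q, hqE, hqT⟩)
        have hxcard : (T.biUnion x).card ≤ T.card := by
          calc (T.biUnion x).card ≤ ∑ q' ∈ T, (x q').card := Finset.card_biUnion_le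
            _ ≤ ∑ q' ∈ T, 1 := by
                apply Finset.sum_le_sum
                intro q' hq'
                obtain ⟨v, hv, _⟩ := hx1 q' hq'
                simp [hv]
            _ = T.card := by simp
        have h1le : 1 ≤ E.card := Finset.card_pos.mpr ⟨q, hqE⟩
        have key : (r - 3) * E.card + E.card = (r - 2) * E.card := by
          have : r - 3 + 1 = r - 2 := by omega
          rw [← this, Nat.succ_mul]
        calc bad.card ≤ B0.card + (T.biUnion x).card := Finset.card_union_le _ _
          _ ≤ (Fintype.card α + (r - 3) * E.card) + T.card :=
              Nat.add_le_add hB0card hxcard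
          _ < Fintype.card α + ((r - 3) * E.card + E.card) := by omega
          _ = (r - 2) * E.card + Fintype.card α := by rw [key]; omega
          _ ≤ t := by rw [← hcardE]; exact ht
      have hlt : bad.card < (cand q).card := lt_of_lt_of_le hbadcard (hcandcard q hqE)
      obtain ⟨v, hvc, hvb⟩ := Finset.not_subset.mp
        (fun hsub' => absurd (Finset.card_le_card hsub') (not_le.mpr hlt))
      refine ⟨Function.update x q {v}, ?_, ?_, ?_⟩
      · intro q' hq'
        have hne : q' ≠ q := fun h => hq' (h ▸ Finset.mem_insert_self q T)
        rw [Function.update_of_ne hne]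
        exact hx0 q' (fun h => hq' (Finset.mem_insert_of_mem h))
      · intro q' hq'
        rcases Finset.mem_insert.mp hq' with h | h
        · subst h
          refine ⟨v, by simp, hvc, fun hv => hvb (by rw [hbad]; exact Finset.mem_union_left _ hv)⟩
        · have hne : q' ≠ q := fun he => hqT (he ▸ h)
          rw [Function.update_of_ne hne]
          exact hx1 q' h
      · intro q₁ hq₁ q₂ hq₂ hne
        have hvnotT : ∀ q' ∈ T, v ∉ x q' := by
          intro q' hq' hv
          exact hvb (by rw [hbad]; exact Finset.mem_union_right _ (Finset.mem_biUnion.mpr ⟨q', hq', hv⟩))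
        rcases Finset.mem_insert.mp hq₁ with h₁ | h₁ <;>
          rcases Finset.mem_insert.mp hq₂ with h₂ | h₂
        · exact absurd (h₁.trans h₂.symm) hne
        · subst h₁
          rw [Function.update_self, Function.update_of_ne (ne_of_mem_of_not_mem h₂ hqT)]
          simpa [Finset.disjoint_left] using hvnotT q₂ h₂
        · subst h₂
          rw [Function.update_self, Function.update_of_ne (ne_of_mem_of_not_mem h₁ hqT)]
          rw [Finset.disjoint_right]
          simpa using hvnotT q₁ h₁
        · rw [Function.update_of_ne (ne_of_mem_of_not_mem h₁ hqT),
            Function.update_of_ne (ne_of_mem_of_not_mem h₂ hqT)]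
          exact hx2 q₁ h₁ q₂ h₂ hne
  obtain ⟨x, hx0, hx1, hx2⟩ := greedy E (le_refl E)
  refine ⟨φ, fun q => S q ∪ x q, ?_, ?_, ?_, ?_⟩
  · intro a b hadj
    have hq : s(a,b) ∈ E := by
      rw [hE, SimpleGraph.mem_edgeFinset, SimpleGraph.mem_edgeSet]; exact hadj
    obtain ⟨v, hxv, hvc, _⟩ := hx1 _ hq
    have hvA : v ∉ A s(a,b) := (hcandmem _ hq v hvc).2
    have hvS : v ∉ S s(a,b) := by
      intro hv
      exact hvA (by rw [hAdef]; exact Finset.mem_insert_of_mem (Finset.mem_insert_of_mem hv))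
    show (S s(a,b) ∪ x s(a,b)).card = r - 2
    rw [hxv]
    have huv : ({v} : Finset V) ∪ S s(a,b) = insert v (S s(a,b)) := by
      ext w; simp
    rw [Finset.union_comm, huv, Finset.card_insert_of_notMem hvS, hScard _ hq]
    omega
  · intro a b hadj w hw
    have hq : s(a,b) ∈ E := by
      rw [hE, SimpleGraph.mem_edgeFinset, SimpleGraph.mem_edgeSet]; exact hadj
    rcases Finset.mem_union.mp hw with h | h
    · exact h2 a b hadj w h
    · obtain ⟨v, hxv, _, hvB⟩ := hx1 _ hq
      rw [hxv, Finset.mem_singleton] at h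
      subst h
      rintro ⟨a', rfl⟩
      exact hvB (by rw [hB0]; exact Finset.mem_union_left _ (Finset.mem_image_of_mem φ (Finset.mem_univ a')))
  · intro e he e' he' hne
    have heE : e ∈ E := by rw [hE, SimpleGraph.mem_edgeFinset]; exact he
    have heE' : e' ∈ E := by rw [hE, SimpleGraph.mem_edgeFinset]; exact he'
    obtain ⟨v, hxv, _, hvB⟩ := hx1 _ heE
    obtain ⟨v', hxv', _, hvB'⟩ := hx1 _ heE'
    have hSnotB : ∀ q ∈ E, ∀ w, w ∉ B0 → w ∉ S q := by
      intro q hq w hwB hwS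
      exact hwB (by rw [hB0]; exact Finset.mem_union_right _ (Finset.mem_biUnion.mpr ⟨q, hq, hwS⟩))
    rw [Finset.disjoint_union_left, Finset.disjoint_union_right, Finset.disjoint_union_right]
    refine ⟨⟨h3 e he e' he' hne, ?_⟩, ?_, hx2 _ heE _ heE' hne⟩
    · rw [hxv', Finset.disjoint_singleton_right]
      exact hSnotB e heE v' hvB'
    · rw [hxv, Finset.disjoint_singleton_left]
      exact hSnotB e' heE' v hvB
  · intro a b hadj
    have hq : s(a,b) ∈ E := by
      rw [hE, SimpleGraph.mem_edgeFinset, SimpleGraph.mem_edgeSet]; exact hadj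
    obtain ⟨v, hxv, hvc, _⟩ := hx1 _ hq
    have hmem := (hcandmem _ hq v hvc).1
    rw [hAdef] at hmem
    have heq : insert (φ a) (insert (φ b) (S s(a,b) ∪ x s(a,b)))
        = insert v (insert (φ a) (insert (φ b) (S s(a,b)))) := by
      rw [hxv]
      ext w
      simp only [Finset.mem_insert, Finset.mem_union, Finset.mem_singleton]
      tauto
    rw [heq]
    exact hmem
end

section
/- Let r ≥ 2, let F be a graph, let G be an F^{(r)+}-free r-graph, and set t = (r−2)|E(F)| + |V(F)|. Define G_r = G and, for 2 ≤ i < r, G_i = Δ*(t)G_{i+1}. Then for every 2 ≤ i ≤ r, the i-graph G_i is F^{(i)+}-free. -/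
open Finset
open scoped Classical

private noncomputable def expCore {α V : Type*} [DecidableEq V] (φ : α ↪ V)
    (S : Sym2 α → Finset V) : Sym2 α → Finset V :=
  Sym2.lift ⟨fun a b => insert (φ a) (insert (φ b) (S s(a, b))),
    fun a b => by dsimp only; rw [Sym2.eq_swap, Finset.insert_comm]⟩

private lemma expCore_mk {α V : Type*} [DecidableEq V] (φ : α ↪ V)
    (S : Sym2 α → Finset V) (a b : α) :
    expCore φ S s(a, b) = insert (φ a) (insert (φ b) (S s(a, b))) := rfl

attribute [irreducible] expCore

set_option maxHeartbeats 1000000 in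
lemma hyper_step {α V : Type*} [Fintype α] [Fintype V] [DecidableEq V]
    (F : SimpleGraph α) (n t : ℕ) (hn : 3 ≤ n) (H : HyperGraph V n)
    (ht : Fintype.card α + (n - 2) * F.edgeFinset.card ≤ t)
    (h : (shadowOp t H).ContainsExpansion F) : H.ContainsExpansion F := by
  classical
  obtain ⟨φ, S, h1, h2, h3, h4⟩ := h
  set core : Sym2 α → Finset V := expCore φ S with hcoredef
  have hcore : ∀ a b, core s(a, b) = insert (φ a) (insert (φ b) (S s(a, b))) := fun a b =>
    expCore_mk φ S a b
  have hScard : ∀ e ∈ F.edgeFinset, (S e).card = n - 1 - 2 := by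
    intro e
    induction e using Sym2.ind with
    | _ a b =>
      intro he
      exact h1 a b ((F.mem_edgeSet).mp (SimpleGraph.mem_edgeFinset.mp he))
  have hcorecard : ∀ a b, F.Adj a b → (core s(a, b)).card = n - 1 := by
    intro a b hab
    rw [hcore]
    exact (shadowOp t H).uniform _ (h4 a b hab)
  have hheavy : ∀ a b, F.Adj a b →
      t ≤ (H.edges.filter (fun E => core s(a, b) ⊆ E)).card := by
    intro a b hab
    have := h4 a b hab
    simp only [shadowOp, Finset.mem_filter, Finset.mem_univ, true_and] at this
    rw [hcore]
    exact this.2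
  obtain ⟨forb, hforbdef⟩ : ∃ fb : Finset V,
      fb = (Finset.univ.image φ) ∪ F.edgeFinset.biUnion S := ⟨_, rfl⟩
  have hforbcard : forb.card ≤ Fintype.card α + (n - 3) * F.edgeFinset.card := by
    rw [hforbdef]
    refine (Finset.card_union_le _ _).trans (add_le_add ?_ ?_)
    · exact (Finset.card_image_le).trans (by simp)
    · refine (Finset.card_biUnion_le).trans ?_
      rw [mul_comm]
      refine Finset.sum_le_card_nsmul _ _ _ ?_
      intro e he
      rw [hScard e he]
      omega
  obtain ⟨cand, hcanddef⟩ : ∃ c : Sym2 α → Finset V, ∀ e, c e =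
      ((H.edges.filter (fun E => core e ⊆ E)).biUnion (fun E => E \ core e)) \ forb :=
    ⟨_, fun _ => rfl⟩
  have claimA : ∀ e ∈ F.edgeFinset, F.edgeFinset.card ≤ (cand e).card := by
    intro e
    induction e using Sym2.ind with
    | _ a b =>
      intro he
      have hab : F.Adj a b := (F.mem_edgeSet).mp (SimpleGraph.mem_edgeFinset.mp he)
      set U : Finset V :=
        (H.edges.filter (fun E => core s(a, b) ⊆ E)).biUnion (fun E => E \ core s(a, b)) with hUdef
      have hU : t ≤ U.card := by
        refine (hheavy a b hab).trans ?_
        have hsub : H.edges.filter (fun E => core s(a, b) ⊆ E) ⊆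
            U.image (fun v => insert v (core s(a, b))) := by
          intro E hE
          obtain ⟨hE1, hE2⟩ := Finset.mem_filter.mp hE
          have hcard : (E \ core s(a, b)).card = 1 := by
            rw [Finset.card_sdiff_of_subset hE2, H.uniform E hE1, hcorecard a b hab]
            omega
          obtain ⟨v, hv⟩ := Finset.card_eq_one.mp hcard
          have hvU : v ∈ U := by
            refine Finset.mem_biUnion.mpr ⟨E, hE, ?_⟩
            rw [hv]; exact Finset.mem_singleton_self v
          refine Finset.mem_image.mpr ⟨v, hvU, ?_⟩
          have : (E \ core s(a, b)) ∪ core s(a, b) = E := Finset.sdiff_union_of_subset hE2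
          rw [hv] at this
          rw [← this, ← Finset.insert_eq]
        exact (Finset.card_le_card hsub).trans (Finset.card_image_le)
      have hsd : U.card - forb.card ≤ (U \ forb).card := Finset.le_card_sdiff _ _
      have hmul : (n - 2) * F.edgeFinset.card = (n - 3) * F.edgeFinset.card +
          F.edgeFinset.card := by
        have h32 : n - 2 = (n - 3) + 1 := by omega
        rw [h32, add_mul, one_mul]
      have : (cand s(a, b)).card = (U \ forb).card := by rw [hcanddef]
      omega
  have hall : ∀ (s : Finset {e // e ∈ F.edgeFinset}),
      s.card ≤ (s.biUnion (fun e => cand e.1)).card := by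
    intro s
    rcases s.eq_empty_or_nonempty with rfl | ⟨e, hes⟩
    · simp
    · have h1' : (cand e.1) ⊆ s.biUnion (fun e => cand e.1) :=
        Finset.subset_biUnion_of_mem (x := e) (fun e => cand e.1) hes
      have h2' : s.card ≤ F.edgeFinset.card := by
        have := Finset.card_le_univ s
        rwa [Fintype.card_coe] at this
      exact h2'.trans ((claimA e.1 e.2).trans (Finset.card_le_card h1'))
  obtain ⟨f, hfinj, hf⟩ :=
    (Finset.all_card_le_biUnion_card_iff_exists_injective
      (fun e : {e // e ∈ F.edgeFinset} => cand e.1)).mp hall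
  -- properties of the chosen extension vertices
  have hf' : ∀ (e : {e // e ∈ F.edgeFinset}), f e ∈
      ((H.edges.filter (fun E => core e.1 ⊆ E)).biUnion (fun E => E \ core e.1)) \ forb := by
    intro e
    have := hf e
    rwa [hcanddef] at this
  have hfnforb : ∀ (e : {e // e ∈ F.edgeFinset}), f e ∉ forb := fun e =>
    (Finset.mem_sdiff.mp (hf' e)).2
  have hfnS : ∀ (e : {e // e ∈ F.edgeFinset}) (e' : Sym2 α), e' ∈ F.edgeFinset →
      f e ∉ S e' := by
    intro e e' he' hmem
    refine hfnforb e ?_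
    rw [hforbdef]
    exact Finset.mem_union_right _ (Finset.mem_biUnion.mpr ⟨e', he', hmem⟩)
  have hfnφ : ∀ (e : {e // e ∈ F.edgeFinset}), f e ∉ Set.range φ := by
    intro e ⟨a, ha⟩
    refine hfnforb e ?_
    rw [hforbdef]
    exact Finset.mem_union_left _ (Finset.mem_image.mpr ⟨a, Finset.mem_univ a, ha⟩)
  have hfE : ∀ (e : {e // e ∈ F.edgeFinset}), ∃ E ∈ H.edges, core e.1 ⊆ E ∧
      f e ∈ E ∧ f e ∉ core e.1 := by
    intro e
    have := (Finset.mem_sdiff.mp (hf' e)).1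
    obtain ⟨E, hE, hfe⟩ := Finset.mem_biUnion.mp this
    obtain ⟨hE1, hE2⟩ := Finset.mem_filter.mp hE
    obtain ⟨hmem, hnmem⟩ := Finset.mem_sdiff.mp hfe
    exact ⟨E, hE1, hE2, hmem, hnmem⟩
  refine ⟨φ, fun e => if he : e ∈ F.edgeFinset then insert (f ⟨e, he⟩) (S e) else S e,
    ?_, ?_, ?_, ?_⟩
  · intro a b hab
    have he : s(a, b) ∈ F.edgeFinset := SimpleGraph.mem_edgeFinset.mpr
      ((F.mem_edgeSet).mpr hab)
    dsimp only
    rw [dif_pos he, Finset.card_insert_of_notMem (hfnS ⟨_, he⟩ _ he), hScard _ he]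
    omega
  · intro a b hab x hx
    have he : s(a, b) ∈ F.edgeFinset := SimpleGraph.mem_edgeFinset.mpr
      ((F.mem_edgeSet).mpr hab)
    dsimp only at hx
    rw [dif_pos he, Finset.mem_insert] at hx
    rcases hx with rfl | hx
    · exact hfnφ ⟨_, he⟩
    · exact h2 a b hab x hx
  · intro e he e' he' hne
    have heF : e ∈ F.edgeFinset := SimpleGraph.mem_edgeFinset.mpr he
    have heF' : e' ∈ F.edgeFinset := SimpleGraph.mem_edgeFinset.mpr he'
    dsimp only
    rw [dif_pos heF, dif_pos heF']
    rw [Finset.disjoint_insert_left, Finset.disjoint_insert_right, Finset.mem_insert]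
    refine ⟨?_, ?_, ?_⟩
    · push_neg
      constructor
      · intro hfeq
        exact hne (Subtype.ext_iff.mp (hfinj hfeq))
      · exact hfnS ⟨e, heF⟩ e' heF'
    · exact hfnS ⟨e', heF'⟩ e heF
    · exact h3 e he e' he' hne
  · intro a b hab
    have he : s(a, b) ∈ F.edgeFinset := SimpleGraph.mem_edgeFinset.mpr
      ((F.mem_edgeSet).mpr hab)
    dsimp only
    rw [dif_pos he]
    obtain ⟨E, hE1, hE2, hE3, hE4⟩ := hfE ⟨_, he⟩
    have heq : insert (φ a) (insert (φ b) (insert (f ⟨s(a, b), he⟩) (S s(a, b)))) =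
        insert (f ⟨s(a, b), he⟩) (core s(a, b)) := by
      rw [hcore]
      rw [Finset.insert_comm (φ b), Finset.insert_comm (φ a)]
    rw [heq]
    have hsub : insert (f ⟨s(a, b), he⟩) (core s(a, b)) ⊆ E :=
      Finset.insert_subset hE3 hE2
    have hcards : E.card ≤ (insert (f ⟨s(a, b), he⟩) (core s(a, b))).card := by
      rw [Finset.card_insert_of_notMem hE4, hcorecard a b hab, H.uniform E hE1]
      omega
    rw [Finset.eq_of_subset_of_card_le hsub hcards]
    exact hE1

/-- Let `t = (r−2)|E(F)| + |V(F)|`, `G_r = G` and `G_i = Δ*(t)G_{i+1}`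
for `2 ≤ i < r` (so `G_i = iterShadow t G (r−i)`). If `G` is `F^{(r)+}`-free, then each
`G_i` is `F^{(i)+}`-free. -/
theorem statement_6 {α V : Type*} [Fintype α] [Fintype V] [DecidableEq V]
    (F : SimpleGraph α) (r t : ℕ) (hr : 2 ≤ r)
    (ht : t = (r - 2) * Nat.card F.edgeSet + Fintype.card α)
    (G : HyperGraph V r) (hG : ¬ G.ContainsExpansion F) :
    ∀ i, 2 ≤ i → i ≤ r → ¬ (iterShadow t G (r - i)).ContainsExpansion F := by
  classical
  have hE : Nat.card F.edgeSet = F.edgeFinset.card := by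
    rw [Nat.card_coe_set_eq, Set.ncard_eq_toFinset_card']
    congr 1
  have key : ∀ j, j ≤ r - 2 → ¬ (iterShadow t G j).ContainsExpansion F := by
    intro j
    induction j with
    | zero => intro _ h; exact hG h
    | succ j ih =>
      intro hj h
      refine ih (by omega) (hyper_step F (r - j) t (by omega) (iterShadow t G j) ?_ h)
      rw [ht, hE]
      have hmul : (r - j - 2) * F.edgeFinset.card ≤ (r - 2) * F.edgeFinset.card :=
        Nat.mul_le_mul_right _ (by omega)
      omega
  intro i h2 hir h
  exact key (r - i) (by omega) h
end

section
/- Let r ≥ 2, let F be a graph, let F_0 be a subgraph of F, and let t ≥ (r−2)|E(F)| + |V(F)|. Let G be an r-graph, and suppose there is a copy of F in the shadow graph of G with the following properties: (a) the edges of the copy corresponding to edges of F_0 form the core of a copy of F_0^{(r)+} contained in G, whose expansion vertices are disjoint from the vertex set of the copy of F; and (b) every edge of the copy of F not corresponding to an edge of F_0 is a t-fat pair with respect to G. Then G contains a copy of F^{(r)+} whose core is this copy of F. -/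
open Finset
open scoped Classical

lemma sym2_exists_eq_mk {α : Type*} (e : Sym2 α) : ∃ a b, e = s(a, b) := by
  induction e using Sym2.ind with
  | _ a b => exact ⟨a, b, rfl⟩

lemma exists_good_edge {V : Type*} [DecidableEq V] (E : Finset (Finset V)) (A B : Finset V)
    (hpair : ∀ e ∈ E, ∀ e' ∈ E, e ≠ e' → e ∩ e' = A) (hAB : A ⊆ B)
    (hcard : (B \ A).card < E.card) :
    ∃ e ∈ E, Disjoint (e \ A) B := by
  by_contra hcon
  push_neg at hcon
  have hne : ∀ e ∈ E, ((e \ A) ∩ (B \ A)).Nonempty := by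
    intro e he
    obtain ⟨x, hx1, hx2⟩ := Finset.not_disjoint_iff.mp (hcon e he)
    exact ⟨x, Finset.mem_inter.mpr ⟨hx1,
      Finset.mem_sdiff.mpr ⟨hx2, (Finset.mem_sdiff.mp hx1).2⟩⟩⟩
  have hEpos : E.Nonempty := Finset.card_pos.mp (by omega)
  obtain ⟨e₁, he₁⟩ := hEpos
  obtain ⟨x₀, _⟩ := hne e₁ he₁
  have hle : E.card ≤ (B \ A).card := by
    apply Finset.card_le_card_of_injOn
      (fun e => if h : ((e \ A) ∩ (B \ A)).Nonempty then h.choose else x₀)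
    · intro e he
      have h := hne e he
      simp only [dif_pos h]
      exact (Finset.mem_inter.mp h.choose_spec).2
    · intro e he e' he' hfe
      by_contra hnee
      have h := hne e he
      have h' := hne e' he'
      simp only [dif_pos h, dif_pos h'] at hfe
      have hx : h.choose ∈ e \ A := (Finset.mem_inter.mp h.choose_spec).1
      have hx' : h'.choose ∈ e' \ A := (Finset.mem_inter.mp h'.choose_spec).1
      rw [hfe] at hx
      have : h'.choose ∈ e ∩ e' :=
        Finset.mem_inter.mpr ⟨(Finset.mem_sdiff.mp hx).1, (Finset.mem_sdiff.mp hx').1⟩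
      rw [hpair e he e' he' hnee] at this
      exact (Finset.mem_sdiff.mp hx).2 this
  omega

/-- If a copy of `F` (given by `φ`) in the shadow graph of `G` is such that
the edges of a subgraph `F₀` form the core of a copy of `F₀^{(r)+}` in `G` whose expansion
vertices avoid the copy of `F`, and every other edge of the copy of `F` is a `t`-fat pair
with `t ≥ (r−2)|E(F)| + |V(F)|`, then `G` contains a copy of `F^{(r)+}` with this core. -/
theorem statement_7 {α V : Type*} [Fintype α] [DecidableEq V]
    (F F₀ : SimpleGraph α) (hF₀ : F₀ ≤ F) (r t : ℕ) (hr : 2 ≤ r)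
    (ht : (r - 2) * Nat.card F.edgeSet + Fintype.card α ≤ t)
    (G : HyperGraph V r) (φ : α ↪ V)
    (hshadow : ∀ a b, F.Adj a b → ∃ e ∈ G.edges, φ a ∈ e ∧ φ b ∈ e)
    (S : Sym2 α → Finset V) (hwit : G.IsExpansionWitness F₀ φ S)
    (hfat : ∀ a b, F.Adj a b → ¬ F₀.Adj a b → TFat t G {φ a, φ b}) :
    ∃ S' : Sym2 α → Finset V, G.IsExpansionWitness F φ S' := by
  classical
  obtain ⟨hS1, hS2, hS3, hS4⟩ := hwit
  set D : Finset (Sym2 α) := F.edgeFinset \ F₀.edgeFinset with hD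
  have hEcard : F.edgeFinset.card = Nat.card F.edgeSet := by
    simp [SimpleGraph.edgeFinset, Set.toFinset_card, Nat.card_eq_fintype_card]
  have hScard : ∀ e ∈ F₀.edgeFinset, (S e).card = r - 2 := by
    intro e
    obtain ⟨a, b, rfl⟩ := sym2_exists_eq_mk e
    intro he
    exact hS1 a b (by simpa using he)
  have hDnotF₀ : ∀ e ∈ D, e ∉ F₀.edgeFinset := fun e he => (Finset.mem_sdiff.mp he).2
  have main : ∀ T : Finset (Sym2 α), T ⊆ D → ∃ S' : Sym2 α → Finset V,
      (∀ e, e ∉ T → S' e = S e) ∧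
      (∀ a b : α, s(a, b) ∈ T → (S' s(a, b)).card = r - 2 ∧
        (∀ x ∈ S' s(a, b), x ∉ Set.range φ) ∧
        insert (φ a) (insert (φ b) (S' s(a, b))) ∈ G.edges) ∧
      (∀ e ∈ F₀.edgeFinset ∪ T, ∀ e' ∈ F₀.edgeFinset ∪ T, e ≠ e' →
        Disjoint (S' e) (S' e')) := by
    intro T
    induction T using Finset.induction_on with
    | empty =>
      intro _
      refine ⟨S, fun e _ => rfl, by simp, ?_⟩
      simp only [Finset.union_empty]
      intro e he e' he' hne
      exact hS3 e (by simpa using he) e' (by simpa using he') hne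
    | @insert e₀ T' he₀ IH =>
      intro hsub
      have hT' : T' ⊆ D := fun x hx => hsub (Finset.mem_insert_of_mem hx)
      obtain ⟨S', h1', h2', h3'⟩ := IH hT'
      have he₀D : e₀ ∈ D := hsub (Finset.mem_insert_self _ _)
      obtain ⟨a, b, rfl⟩ := sym2_exists_eq_mk e₀
      have hadj : F.Adj a b := by
        have := (Finset.mem_sdiff.mp he₀D).1
        simpa using this
      have hnadj : ¬ F₀.Adj a b := by
        intro h
        exact (Finset.mem_sdiff.mp he₀D).2 (by simpa using h)
      obtain ⟨E, hEG, htE, hpair⟩ := hfat a b hadj hnadj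
      set A : Finset V := {φ a, φ b} with hA
      have hab' : a ≠ b := hadj.ne
      have hφab : φ a ≠ φ b := fun h => hab' (φ.injective h)
      have hAcard : A.card = 2 := Finset.card_pair hφab
      set B : Finset V :=
        (Finset.univ.image φ) ∪ (F₀.edgeFinset ∪ T').biUnion (fun e => S' e) with hB
      have hsab_not : s(a, b) ∉ F₀.edgeFinset ∪ T' := by
        intro h
        rcases Finset.mem_union.mp h with h | h
        · exact (Finset.mem_sdiff.mp he₀D).2 h
        · exact he₀ h
      have hS'card : ∀ e ∈ F₀.edgeFinset ∪ T', (S' e).card = r - 2 := by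
        intro e he
        rcases Finset.mem_union.mp he with h | h
        · have hnot : e ∉ T' := fun hc => hDnotF₀ e (hT' hc) h
          rw [h1' e hnot]
          exact hScard e h
        · obtain ⟨a', b', rfl⟩ := sym2_exists_eq_mk e
          exact (h2' a' b' h).1
      have hsubF : F₀.edgeFinset ∪ T' ⊆ F.edgeFinset := by
        intro x hx
        rcases Finset.mem_union.mp hx with h | h
        · exact SimpleGraph.edgeFinset_mono hF₀ h
        · exact (Finset.mem_sdiff.mp (hT' h)).1
      have hBcard : B.card ≤ t := by
        have hc1 : (Finset.univ.image φ).card ≤ Fintype.card α :=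
          (Finset.card_image_le).trans (by simp)
        have hc2 : ((F₀.edgeFinset ∪ T').biUnion (fun e => S' e)).card ≤
            (F₀.edgeFinset ∪ T').card * (r - 2) := by
          refine (Finset.card_biUnion_le).trans ?_
          calc ∑ e ∈ F₀.edgeFinset ∪ T', (S' e).card
              ≤ (F₀.edgeFinset ∪ T').card • (r - 2) :=
                Finset.sum_le_card_nsmul _ _ _ (fun e he => (hS'card e he).le)
            _ = (F₀.edgeFinset ∪ T').card * (r - 2) := by rw [smul_eq_mul]
        have hc3 : (F₀.edgeFinset ∪ T').card ≤ F.edgeFinset.card :=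
          Finset.card_le_card hsubF
        have hc4 : F.edgeFinset.card * (r - 2) = (r - 2) * Nat.card F.edgeSet := by
          rw [hEcard, Nat.mul_comm]
        have hc5 : B.card ≤ (Finset.univ.image φ).card +
            ((F₀.edgeFinset ∪ T').biUnion (fun e => S' e)).card :=
          Finset.card_union_le _ _
        have hc6 : (F₀.edgeFinset ∪ T').card * (r - 2) ≤ F.edgeFinset.card * (r - 2) :=
          Nat.mul_le_mul_right _ hc3
        omega
      have hAB : A ⊆ B := by
        intro x hx
        rcases Finset.mem_insert.mp hx with rfl | hx
        · exact Finset.mem_union_left _ (Finset.mem_image_of_mem φ (Finset.mem_univ a))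
        · rw [Finset.mem_singleton] at hx
          subst hx
          exact Finset.mem_union_left _ (Finset.mem_image_of_mem φ (Finset.mem_univ b))
      have h2t : 2 ≤ t := by
        have : 2 ≤ Fintype.card α := by
          haveI : Nontrivial α := ⟨a, b, hab'⟩
          exact Fintype.one_lt_card
        omega
      have hsdcard : (B \ A).card < E.card := by
        rw [Finset.card_sdiff_of_subset hAB, hAcard]
        omega
      obtain ⟨e, heE, hdisj⟩ := exists_good_edge E A B hpair hAB hsdcard
      have hAe : A ⊆ e := by
        obtain ⟨e', he', hne⟩ := Finset.exists_mem_ne (by omega : 1 < E.card) e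
        rw [← hpair e heE e' he' (Ne.symm hne)]
        exact Finset.inter_subset_left
      have heG : e ∈ G.edges := hEG heE
      have hecard : e.card = r := G.uniform e heG
      have heAcard : (e \ A).card = r - 2 := by
        rw [Finset.card_sdiff_of_subset hAe, hecard, hAcard]
      have heAavoid : ∀ x ∈ e \ A, x ∉ Set.range φ := by
        intro x hx hxr
        obtain ⟨c, rfl⟩ := hxr
        exact Finset.disjoint_left.mp hdisj hx
          (Finset.mem_union_left _ (Finset.mem_image_of_mem φ (Finset.mem_univ c)))
      have hS'B : ∀ z ∈ F₀.edgeFinset ∪ T', S' z ⊆ B := by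
        intro z hz w hw
        exact Finset.mem_union_right _ (Finset.mem_biUnion.mpr ⟨z, hz, hw⟩)
      refine ⟨Function.update S' s(a, b) (e \ A), ?_, ?_, ?_⟩
      · intro e' he'
        have hne : e' ≠ s(a, b) := fun h => he' (h ▸ Finset.mem_insert_self _ _)
        rw [Function.update_of_ne hne]
        exact h1' e' (fun hc => he' (Finset.mem_insert_of_mem hc))
      · intro a' b' hmem
        rcases Finset.mem_insert.mp hmem with heq | hT
        · have hSval : Function.update S' s(a, b) (e \ A) s(a', b') = e \ A := by
            rw [heq, Function.update_self]
          have hpairset : ({φ a', φ b'} : Finset V) = A := by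
            rcases Sym2.eq_iff.mp heq with ⟨h1, h2⟩ | ⟨h1, h2⟩
            · rw [h1, h2]
            · rw [h1, h2, hA, Finset.pair_comm]
          refine ⟨by rw [hSval]; exact heAcard, by rw [hSval]; exact heAavoid, ?_⟩
          rw [hSval]
          have hins : insert (φ a') (insert (φ b') (e \ A)) =
              ({φ a', φ b'} : Finset V) ∪ (e \ A) := by
            ext x; simp [or_assoc]
          rw [hins, hpairset, Finset.union_sdiff_of_subset hAe]
          exact heG
        · have hne : s(a', b') ≠ s(a, b) := fun h => he₀ (h ▸ hT)
          rw [Function.update_of_ne hne]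
          exact h2' a' b' hT
      · have hmem' : ∀ z, z ∈ F₀.edgeFinset ∪ insert s(a, b) T' →
            z = s(a, b) ∨ z ∈ F₀.edgeFinset ∪ T' := by
          intro z hz
          rcases Finset.mem_union.mp hz with h | h
          · exact Or.inr (Finset.mem_union_left _ h)
          · rcases Finset.mem_insert.mp h with h | h
            · exact Or.inl h
            · exact Or.inr (Finset.mem_union_right _ h)
        intro x hx y hy hxy
        rcases hmem' x hx with rfl | hx'
        · rcases hmem' y hy with rfl | hy'
          · exact absurd rfl hxy
          · rw [Function.update_self,
              Function.update_of_ne (fun h => hsab_not (by rw [← h]; exact hy'))]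
            exact Finset.disjoint_of_subset_right (hS'B y hy') hdisj
        · rcases hmem' y hy with rfl | hy'
          · rw [Function.update_self,
              Function.update_of_ne (fun h => hsab_not (by rw [← h]; exact hx'))]
            exact (Finset.disjoint_of_subset_right (hS'B x hx') hdisj).symm
          · rw [Function.update_of_ne (fun h => hsab_not (by rw [← h]; exact hx')),
              Function.update_of_ne (fun h => hsab_not (by rw [← h]; exact hy'))]
            exact h3' x hx' y hy' hxy
  obtain ⟨S', h1, h2, h3⟩ := main D (subset_refl D)
  have hunion : F₀.edgeFinset ∪ D = F.edgeFinset :=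
    Finset.union_sdiff_of_subset (SimpleGraph.edgeFinset_mono hF₀)
  have hcase : ∀ a b : α, F.Adj a b →
      (F₀.Adj a b ∧ S' s(a, b) = S s(a, b)) ∨ s(a, b) ∈ D := by
    intro a b hadj
    by_cases h0 : F₀.Adj a b
    · refine Or.inl ⟨h0, h1 _ ?_⟩
      intro hc
      exact (Finset.mem_sdiff.mp hc).2 (by simpa using h0)
    · refine Or.inr (Finset.mem_sdiff.mpr ⟨by simpa using hadj, by simpa using h0⟩)
  refine ⟨S', ?_, ?_, ?_, ?_⟩
  · intro a b hadj
    rcases hcase a b hadj with ⟨h0, heq⟩ | hmem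
    · rw [heq]; exact hS1 a b h0
    · exact (h2 a b hmem).1
  · intro a b hadj
    rcases hcase a b hadj with ⟨h0, heq⟩ | hmem
    · rw [heq]; exact hS2 a b h0
    · exact (h2 a b hmem).2.1
  · intro e he e' he' hne
    refine h3 e ?_ e' ?_ hne
    · rw [hunion]; exact SimpleGraph.mem_edgeFinset.mpr he
    · rw [hunion]; exact SimpleGraph.mem_edgeFinset.mpr he'
  · intro a b hadj
    rcases hcase a b hadj with ⟨h0, heq⟩ | hmem
    · rw [heq]; exact hS4 a b h0
    · exact (h2 a b hmem).2.2
end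

section
/- Let r ≥ 2, let F be a graph, and set t = (r−2)|E(F)| + |V(F)|. If an r-graph G is F^{(r)+}-free, then the graph G(G) on the vertex set of G, whose edges are the pairs of vertices that are t-fat with respect to G, is F-free. -/
open Finset
open scoped Classical

private lemma sym2_rep {α : Type*} (F : SimpleGraph α) (ε : Sym2 α) (h : ε ∈ F.edgeSet) :
    ∃ a b, F.Adj a b ∧ ε = s(a, b) := by
  induction ε using Sym2.ind with
  | _ a b => exact ⟨a, b, h, rfl⟩

private lemma exists_S_aux {α V : Type*} [Fintype α] [DecidableEq V]
    (F : SimpleGraph α) (r t : ℕ)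
    (ht : t = (r - 2) * F.edgeFinset.card + Fintype.card α)
    (G : HyperGraph V r) (f : α ↪ V)
    (hf : ∀ a b, F.Adj a b → TFat t G {f a, f b}) :
    ∀ T : Finset (Sym2 α), T ⊆ F.edgeFinset →
    ∃ S : Sym2 α → Finset V,
      (∀ e ∈ T, ∃ a b, e = s(a, b) ∧ F.Adj a b ∧
        insert (f a) (insert (f b) (S e)) ∈ G.edges) ∧
      (∀ e ∈ T, (S e).card = r - 2) ∧
      (∀ e ∈ T, ∀ x ∈ S e, x ∉ Set.range f) ∧
      (∀ e ∈ T, ∀ e' ∈ T, e ≠ e' → Disjoint (S e) (S e')) := by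
  intro T
  induction T using Finset.induction_on with
  | empty => intro _; exact ⟨fun _ => ∅, by simp, by simp, by simp, by simp⟩
  | @insert ε T hεT ih =>
    intro hsub
    obtain ⟨S, hS1, hS2, hS3, hS4⟩ := ih (fun x hx => hsub (mem_insert_of_mem hx))
    obtain ⟨a, b, hadj, rfl⟩ := sym2_rep F ε
      (SimpleGraph.mem_edgeFinset.mp (hsub (mem_insert_self _ _)))
    have hab : a ≠ b := hadj.ne
    have hfab : f a ≠ f b := fun h => hab (f.injective h)
    have hα : 2 ≤ Fintype.card α := Fintype.one_lt_card_iff_nontrivial.mpr ⟨⟨a, b, hab⟩⟩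
    obtain ⟨E, hEG, htE, hEint⟩ := hf a b hadj
    have h2E : 1 < E.card := lt_of_lt_of_le (by omega) htE
    have hpair : ∀ e' ∈ E, ({f a, f b} : Finset V) ⊆ e' := by
      intro e' he'
      obtain ⟨e'', he'', hne⟩ := Finset.exists_mem_ne h2E e'
      rw [← hEint e' he' e'' he'' hne.symm]
      exact inter_subset_left
    set B : Finset V := Finset.univ.image f ∪ T.biUnion S with hB
    have hmemB : ∀ c : α, f c ∈ B :=
      fun c => mem_union_left _ (mem_image_of_mem f (mem_univ c))
    have hpairB : ({f a, f b} : Finset V) ⊆ B := by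
      rw [Finset.insert_subset_iff, Finset.singleton_subset_iff]
      exact ⟨hmemB a, hmemB b⟩
    have hBcard : B.card ≤ t := by
      have h1 : (Finset.univ.image f).card ≤ Fintype.card α := by
        simpa using Finset.card_image_le (s := (Finset.univ : Finset α)) (f := f)
      have h2 : (T.biUnion S).card ≤ (r - 2) * T.card := by
        calc (T.biUnion S).card ≤ ∑ e ∈ T, (S e).card := Finset.card_biUnion_le
          _ = ∑ _e ∈ T, (r - 2) := Finset.sum_congr rfl (fun e he => hS2 e he)
          _ = T.card * (r - 2) := Finset.sum_const _
          _ = (r - 2) * T.card := Nat.mul_comm _ _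
      have h3 : T.card ≤ F.edgeFinset.card :=
        Finset.card_le_card (fun x hx => hsub (mem_insert_of_mem hx))
      calc B.card ≤ (Finset.univ.image f).card + (T.biUnion S).card := Finset.card_union_le _ _
        _ ≤ Fintype.card α + (r - 2) * T.card := Nat.add_le_add h1 h2
        _ ≤ Fintype.card α + (r - 2) * F.edgeFinset.card :=
            Nat.add_le_add_left (Nat.mul_le_mul_left _ h3) _
        _ = t := by omega
    classical
    set bad : Finset (Finset V) :=
      E.filter (fun e' => ((e' \ {f a, f b}) ∩ B).Nonempty) with hbad
    have hbadcard : bad.card ≤ (B \ {f a, f b}).card := by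
      set g : Finset V → V := fun e' =>
        if h : ((e' \ {f a, f b}) ∩ B).Nonempty then h.choose else f a with hg
      have hgmem : ∀ e' ∈ bad, g e' ∈ (e' \ {f a, f b}) ∩ B := by
        intro e' he'
        have h := (Finset.mem_filter.mp he').2
        simp only [hg, dif_pos h]
        exact h.choose_spec
      apply Finset.card_le_card_of_injOn g
      · intro e' he'
        have h := hgmem e' he'
        rw [Finset.mem_inter, Finset.mem_sdiff] at h
        exact Finset.mem_sdiff.mpr ⟨h.2, h.1.2⟩
      · intro e₁ h₁ e₂ h₂ hgeq
        by_contra hne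
        have m₁ := hgmem e₁ h₁
        have m₂ := hgmem e₂ h₂
        rw [Finset.mem_inter, Finset.mem_sdiff] at m₁ m₂
        have hin : g e₁ ∈ e₁ ∩ e₂ := Finset.mem_inter.mpr ⟨m₁.1.1, hgeq ▸ m₂.1.1⟩
        rw [hEint e₁ (Finset.mem_of_mem_filter _ h₁) e₂ (Finset.mem_of_mem_filter _ h₂) hne]
          at hin
        exact m₁.1.2 hin
    have hsd : (B \ {f a, f b}).card + 2 = B.card := by
      have := Finset.card_sdiff_add_card_eq_card hpairB
      rwa [Finset.card_pair hfab] at this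
    have hbadlt : bad.card < E.card := by omega
    have hbadsub : bad ⊆ E := Finset.filter_subset _ _
    have hE0 : (E \ bad).Nonempty := by
      rw [← Finset.card_pos, Finset.card_sdiff_of_subset hbadsub]
      omega
    obtain ⟨e₀, he₀⟩ := hE0
    rw [Finset.mem_sdiff] at he₀
    obtain ⟨he₀E, he₀bad⟩ := he₀
    have hDB : ∀ x ∈ e₀ \ ({f a, f b} : Finset V), x ∉ B := by
      intro x hx hxB
      exact he₀bad (Finset.mem_filter.mpr ⟨he₀E, ⟨x, Finset.mem_inter.mpr ⟨hx, hxB⟩⟩⟩)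
    have he₀card : e₀.card = r := G.uniform e₀ (hEG he₀E)
    have hDcard : (e₀ \ ({f a, f b} : Finset V)).card = r - 2 := by
      rw [Finset.card_sdiff_of_subset (hpair e₀ he₀E), Finset.card_pair hfab, he₀card]
    have hins : insert (f a) (insert (f b) (e₀ \ ({f a, f b} : Finset V))) = e₀ := by
      have hs := hpair e₀ he₀E
      rw [Finset.insert_subset_iff, Finset.singleton_subset_iff] at hs
      ext x
      simp only [Finset.mem_insert, Finset.mem_sdiff, Finset.mem_singleton]
      constructor
      · rintro (rfl | rfl | ⟨hx, _⟩)
        exacts [hs.1, hs.2, hx]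
      · intro hx
        by_cases h1 : x = f a
        · exact Or.inl h1
        by_cases h2 : x = f b
        · exact Or.inr (Or.inl h2)
        exact Or.inr (Or.inr ⟨hx, by tauto⟩)
    refine ⟨fun e' => if e' = s(a, b) then e₀ \ {f a, f b} else S e', ?_, ?_, ?_, ?_⟩
    · intro e he
      rcases Finset.mem_insert.mp he with rfl | he
      · exact ⟨a, b, rfl, hadj, by simp only [if_pos rfl, ite_true, ite_false, if_true, if_false]; rw [hins]; exact hEG he₀E⟩
      · obtain ⟨a', b', heq, hadj', hmem⟩ := hS1 e he
        have hne : e ≠ s(a, b) := by rintro rfl; exact hεT he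
        exact ⟨a', b', heq, hadj', by simpa only [if_neg hne, ite_true, ite_false] using hmem⟩
    · intro e he
      rcases Finset.mem_insert.mp he with rfl | he
      · simp only [if_pos rfl, ite_true, ite_false, if_true, if_false]; exact hDcard
      · have hne : e ≠ s(a, b) := by rintro rfl; exact hεT he
        simp only [if_neg hne, ite_true, ite_false, if_true, if_false]; exact hS2 e he
    · intro e he x hx
      rcases Finset.mem_insert.mp he with rfl | he
      · simp only [if_pos rfl, ite_true, ite_false, if_true, if_false] at hx
        rintro ⟨c, rfl⟩
        exact hDB _ hx (hmemB c)
      · have hne : e ≠ s(a, b) := by rintro rfl; exact hεT he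
        simp only [if_neg hne, ite_true, ite_false, if_true, if_false] at hx
        exact hS3 e he x hx
    · have hnew_old : ∀ e' ∈ T, Disjoint (e₀ \ ({f a, f b} : Finset V)) (S e') := by
        intro e' he'
        rw [Finset.disjoint_left]
        intro x hx hx'
        exact hDB x hx (mem_union_right _ (Finset.mem_biUnion.mpr ⟨e', he', hx'⟩))
      intro e he e' he' hnee
      rcases Finset.mem_insert.mp he with rfl | he <;>
        rcases Finset.mem_insert.mp he' with rfl | he'
      · exact absurd rfl hnee
      · have hne' : e' ≠ s(a, b) := by rintro rfl; exact hεT he'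
        simp only [if_pos rfl, if_neg hne', ite_true, ite_false, if_true, if_false]
        exact hnew_old e' he'
      · have hne : e ≠ s(a, b) := by rintro rfl; exact hεT he
        simp only [if_pos rfl, if_neg hne, ite_true, ite_false, if_true, if_false]
        exact (hnew_old e he).symm
      · have hne : e ≠ s(a, b) := by rintro rfl; exact hεT he
        have hne' : e' ≠ s(a, b) := by rintro rfl; exact hεT he'
        simp only [if_neg hne, if_neg hne', ite_true, ite_false, if_true, if_false]
        exact hS4 e he e' he' hnee

/-- With `t = (r−2)|E(F)| + |V(F)|`, if the `r`-graph `G` is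
`F^{(r)+}`-free, then the graph of `t`-fat pairs of `G` is `F`-free. -/
theorem statement_8 {α V : Type*} [Fintype α] [DecidableEq V]
    (F : SimpleGraph α) (r t : ℕ) (hr : 2 ≤ r)
    (ht : t = (r - 2) * Nat.card F.edgeSet + Fintype.card α)
    (G : HyperGraph V r) (hG : ¬ G.ContainsExpansion F) :
    ¬ GraphContains F (fatGraph t G) := by
  rintro ⟨f, hf⟩
  apply hG
  have hm : Nat.card F.edgeSet = F.edgeFinset.card := by
    rw [Nat.card_coe_set_eq, Set.ncard_eq_toFinset_card']; congr 1
  have hfat : ∀ a b, F.Adj a b → TFat t G {f a, f b} := by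
    intro a b hab
    have h := hf a b hab
    rw [fatGraph, SimpleGraph.fromRel_adj] at h
    rcases h.2 with h' | h'
    · exact h'
    · rwa [Finset.pair_comm]
  obtain ⟨S, hS1, hS2, hS3, hS4⟩ :=
    exists_S_aux F r t (by rw [ht, hm]) G f hfat F.edgeFinset le_rfl
  have hmem : ∀ {a b : α}, F.Adj a b → s(a, b) ∈ F.edgeFinset :=
    fun h => SimpleGraph.mem_edgeFinset.mpr (F.mem_edgeSet.mpr h)
  refine ⟨f, S, ?_, ?_, ?_, ?_⟩
  · intro a b hab; exact hS2 _ (hmem hab)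
  · intro a b hab x hx; exact hS3 _ (hmem hab) x hx
  · intro e he e' he' hne
    exact hS4 e (SimpleGraph.mem_edgeFinset.mpr he) e' (SimpleGraph.mem_edgeFinset.mpr he') hne
  · intro a b hab
    obtain ⟨a', b', heq, hadj', hins⟩ := hS1 s(a, b) (hmem hab)
    rcases Sym2.eq_iff.mp heq with ⟨rfl, rfl⟩ | ⟨rfl, rfl⟩
    · exact hins
    · rwa [Finset.insert_comm]
end

section
/- Let r ≥ 2, let F be a graph, set t = (r−2)|E(F)| + |V(F)|, and let 2 ≤ i ≤ r. If an r-graph G is F^{(r)+}-free, then the i-graph whose hyperedges are the i-element vertex sets of G that are t-fat with respect to G is F^{(i)+}-free. -/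
open Finset
open scoped Classical

/-- With `t = (r−2)|E(F)| + |V(F)|` and `2 ≤ i ≤ r`, if the `r`-graph `G`
is `F^{(r)+}`-free, then the `i`-graph of `t`-fat `i`-sets of `G` is `F^{(i)+}`-free. -/
theorem statement_9 {α V : Type*} [Fintype α] [Fintype V] [DecidableEq V]
    (F : SimpleGraph α) (r t i : ℕ) (hr : 2 ≤ r) (hi : 2 ≤ i) (hir : i ≤ r)
    (ht : t = (r - 2) * Nat.card F.edgeSet + Fintype.card α)
    (G : HyperGraph V r) (hG : ¬ G.ContainsExpansion F) :
    ¬ (fatHyper t i G).ContainsExpansion F := by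
  intro hcon
  apply hG
  obtain ⟨φ, S, h1, h2, h3, h4⟩ := hcon
  classical
  -- the core pair + expansion set, as an edge of the fat hypergraph
  set A : Sym2 α → Finset V := Sym2.lift ⟨fun a b => insert (φ a) (insert (φ b) (S s(a, b))),
    fun a b => by simp only [Sym2.eq_swap]; rw [Finset.insert_comm]⟩ with hAdef
  have hAmk : ∀ a b, A s(a, b) = insert (φ a) (insert (φ b) (S s(a, b))) := fun a b => rfl
  set EF := F.edgeFinset with hEF
  set imφ : Finset V := Finset.univ.image φ with himφ
  set B0 : Finset V := imφ ∪ EF.biUnion S with hB0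
  have hedge : ∀ f ∈ EF, ∃ a b, F.Adj a b ∧ f = s(a, b) := by
    intro f hf
    rw [hEF, SimpleGraph.mem_edgeFinset] at hf
    induction f with
    | _ a b => exact ⟨a, b, hf, rfl⟩
  have hfat : ∀ f ∈ EF, (A f).card = i ∧ TFat t G (A f) := by
    intro f hf
    obtain ⟨a, b, hab, rfl⟩ := hedge f hf
    have := h4 a b hab
    simp only [fatHyper, Finset.mem_filter] at this
    exact ⟨(hAmk a b) ▸ this.2.1, (hAmk a b) ▸ this.2.2⟩
  have hScard : ∀ f ∈ EF, (S f).card = i - 2 := by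
    intro f hf
    obtain ⟨a, b, hab, rfl⟩ := hedge f hf
    exact h1 a b hab
  have hSB0 : ∀ f ∈ EF, S f ⊆ B0 := by
    intro f hf
    exact (Finset.subset_biUnion_of_mem S hf).trans Finset.subset_union_right
  have hAB0 : ∀ f ∈ EF, A f ⊆ B0 := by
    intro f hf
    obtain ⟨a, b, hab, rfl⟩ := hedge f hf
    rw [hAmk]
    intro x hx
    rcases Finset.mem_insert.mp hx with rfl | hx
    · exact Finset.mem_union_left _ (Finset.mem_image_of_mem φ (Finset.mem_univ a))
    rcases Finset.mem_insert.mp hx with rfl | hx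
    · exact Finset.mem_union_left _ (Finset.mem_image_of_mem φ (Finset.mem_univ b))
    · exact hSB0 _ hf hx
  have hAim : ∀ a b, F.Adj a b → ∀ x ∈ A s(a, b), x ∈ imφ → x = φ a ∨ x = φ b := by
    intro a b hab x hx hxim
    rw [hAmk] at hx
    rcases Finset.mem_insert.mp hx with rfl | hx
    · exact Or.inl rfl
    rcases Finset.mem_insert.mp hx with rfl | hx
    · exact Or.inr rfl
    · exfalso
      obtain ⟨c, _, rfl⟩ := Finset.mem_image.mp hxim
      exact h2 a b hab _ hx ⟨c, rfl⟩
  have hB0card : B0.card ≤ Fintype.card α + (i - 2) * EF.card := by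
    refine (Finset.card_union_le _ _).trans (Nat.add_le_add ?_ ?_)
    · exact (Finset.card_image_le).trans (by simp)
    · refine (Finset.card_biUnion_le).trans ?_
      rw [Finset.sum_congr rfl hScard, Finset.sum_const, smul_eq_mul, mul_comm]
  -- the greedy selection of hyperedges of G
  have key : ∀ T : Finset (Sym2 α), T ⊆ EF → ∃ E' : Sym2 α → Finset V,
      ∀ f ∈ T, E' f ∈ G.edges ∧ A f ⊆ E' f ∧
        ∀ x ∈ E' f, x ∉ A f → x ∉ B0 ∧ ∀ g ∈ T, g ≠ f → x ∈ E' g → x ∈ A g := by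
    intro T
    induction T using Finset.induction_on with
    | empty => intro _; exact ⟨fun _ => ∅, by simp⟩
    | @insert f T₀ hfT₀ ih =>
      intro hsub
      have hfEF : f ∈ EF := hsub (Finset.mem_insert_self f T₀)
      have hT₀ : T₀ ⊆ EF := fun g hg => hsub (Finset.mem_insert_of_mem hg)
      obtain ⟨E₀, hE₀⟩ := ih hT₀
      obtain ⟨a, b, hab, hfab⟩ := hedge f hfEF
      obtain ⟨hAcard, Efam, hEfS, hEft, hEfint⟩ := hfat f hfEF
      set B : Finset V := B0 ∪ T₀.biUnion (fun g => E₀ g \ A g) with hBdef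
      -- each edge of Efam contains A f
      have ht2 : 2 ≤ t := by
        have h2a : 2 ≤ Fintype.card α := Fintype.one_lt_card_iff.mpr ⟨a, b, hab.ne⟩
        omega
      have hAsub : ∀ e ∈ Efam, A f ⊆ e := by
        intro e he
        obtain ⟨e', he', hne⟩ := Finset.exists_mem_ne (lt_of_lt_of_le one_lt_two (ht2.trans hEft)) e
        rw [← hEfint e' he' e he hne]
        exact Finset.inter_subset_right
      -- size of the forbidden set
      have hBcard : B.card ≤ t - 2 + 2 := by
        have h2a : 2 ≤ Fintype.card α := Fintype.one_lt_card_iff.mpr ⟨a, b, hab.ne⟩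
        have hbu : (T₀.biUnion (fun g => E₀ g \ A g)).card ≤ (r - i) * EF.card := by
          refine (Finset.card_biUnion_le).trans ?_
          have : ∀ g ∈ T₀, (E₀ g \ A g).card = r - i := by
            intro g hg
            obtain ⟨hmem, hsub', _⟩ := hE₀ g hg
            rw [Finset.card_sdiff_of_subset hsub', G.uniform _ hmem, (hfat g (hT₀ hg)).1]
          rw [Finset.sum_congr rfl this, Finset.sum_const, smul_eq_mul, mul_comm]
          exact Nat.mul_le_mul_left _ (Finset.card_le_card hT₀)
        have hBle : B.card ≤ Fintype.card α + (i - 2) * EF.card + (r - i) * EF.card := by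
          rw [hBdef]
          exact (Finset.card_union_le B0 _).trans (Nat.add_le_add hB0card hbu)
        have hEFc : Nat.card F.edgeSet = EF.card := by
          rw [Nat.card_eq_fintype_card, hEF, SimpleGraph.edgeFinset_card]
        have harith : Fintype.card α + (i - 2) * EF.card + (r - i) * EF.card ≤ t := by
          rw [ht, hEFc]
          have : (i - 2) * EF.card + (r - i) * EF.card = (r - 2) * EF.card := by
            rw [← Nat.add_mul]; congr 1; omega
          omega
        omega
      -- the bad edges of Efam
      set bad : Finset (Finset V) := Efam.filter (fun e => ∃ x, x ∈ e ∧ x ∉ A f ∧ x ∈ B)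
        with hbad
      have hbadcard : bad.card < Efam.card := by
        have hchoice : ∀ e ∈ bad, ∃ x, x ∈ e ∧ x ∉ A f ∧ x ∈ B := by
          intro e he; exact (Finset.mem_filter.mp he).2
        set ch : Finset V → V := fun e =>
          if h : ∃ x, x ∈ e ∧ x ∉ A f ∧ x ∈ B then h.choose else φ a with hch
        have hmapsto : ∀ e ∈ bad, ch e ∈ B \ A f := by
          intro e he
          obtain h := hchoice e he
          rw [hch]; simp only [dif_pos h]
          exact Finset.mem_sdiff.mpr ⟨h.choose_spec.2.2, h.choose_spec.2.1⟩
        have hinj : (↑bad : Set (Finset V)).InjOn ch := by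
          intro e he e' he' heq
          by_contra hne
          obtain h := hchoice e he
          obtain h' := hchoice e' he'
          have hxe : ch e ∈ e := by rw [hch]; simp only [dif_pos h]; exact h.choose_spec.1
          have hxe' : ch e ∈ e' := by
            rw [heq, hch]; simp only [dif_pos h']; exact h'.choose_spec.1
          have : ch e ∈ A f := by
            rw [← hEfint e (Finset.mem_of_mem_filter e he) e'
              (Finset.mem_of_mem_filter e' he') hne]
            exact Finset.mem_inter.mpr ⟨hxe, hxe'⟩
          have : ch e ∉ A f := (Finset.mem_sdiff.mp (hmapsto e he)).2
          tauto
        have h1' : bad.card ≤ (B \ A f).card :=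
          Finset.card_le_card_of_injOn ch hmapsto hinj
        have hpair : ({φ a, φ b} : Finset V) ⊆ B ∩ A f := by
          intro x hx
          have hxA : x ∈ A f := by
            rw [hfab, hAmk]
            rcases Finset.mem_insert.mp hx with rfl | hx
            · exact Finset.mem_insert_self _ _
            · simp only [Finset.mem_singleton] at hx
              subst hx
              exact Finset.mem_insert_of_mem (Finset.mem_insert_self _ _)
          exact Finset.mem_inter.mpr ⟨Finset.mem_union_left _ (hAB0 f hfEF hxA), hxA⟩
        have hpaircard : ({φ a, φ b} : Finset V).card = 2 := by
          rw [Finset.card_insert_of_notMem (by simp [φ.injective.ne hab.ne]),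
            Finset.card_singleton]
        have h2' : (B \ A f).card + 2 ≤ B.card := by
          have hsub2 : (B \ A f) ∪ {φ a, φ b} ⊆ B :=
            Finset.union_subset Finset.sdiff_subset
              (hpair.trans Finset.inter_subset_left)
          have hdisj : Disjoint (B \ A f) ({φ a, φ b} : Finset V) := by
            rw [Finset.disjoint_right]
            intro x hx
            simp only [Finset.mem_sdiff, not_and, not_not]
            intro _
            exact (Finset.mem_inter.mp (hpair hx)).2
          calc (B \ A f).card + 2 = ((B \ A f) ∪ {φ a, φ b}).card := by
                rw [Finset.card_union_of_disjoint hdisj, hpaircard]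
            _ ≤ B.card := Finset.card_le_card hsub2
        have ht2 : 2 ≤ t := ht2
        calc bad.card ≤ (B \ A f).card := h1'
          _ ≤ t - 2 := by omega
          _ < t := by omega
          _ ≤ Efam.card := hEft
      obtain ⟨e, he⟩ : (Efam \ bad).Nonempty := by
        rw [← Finset.card_pos]
        have : bad ⊆ Efam := Finset.filter_subset _ _
        have := Finset.card_sdiff_of_subset this
        omega
      rw [Finset.mem_sdiff, hbad, Finset.mem_filter] at he
      have heE : e ∈ Efam := he.1
      have hegood : ∀ x ∈ e, x ∉ A f → x ∉ B := by
        intro x hx hxA hxB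
        exact he.2 ⟨heE, x, hx, hxA, hxB⟩
      refine ⟨fun g => if g = f then e else E₀ g, ?_⟩
      intro g hg
      rcases Finset.mem_insert.mp hg with rfl | hgT₀
      · simp only [if_pos rfl]
        refine ⟨hEfS heE, hAsub e heE, ?_⟩
        intro x hx hxA
        have hxB : x ∉ B := hegood x hx hxA
        constructor
        · intro hxB0; exact hxB (Finset.mem_union_left _ hxB0)
        · intro g' hg' hne
          rcases Finset.mem_insert.mp hg' with rfl | hg'T₀
          · exact absurd rfl hne
          · simp only [if_neg hne]
            intro hxg'
            by_contra hxA'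
            exact hxB (Finset.mem_union_right _
              (Finset.mem_biUnion.mpr ⟨g', hg'T₀, Finset.mem_sdiff.mpr ⟨hxg', hxA'⟩⟩))
      · have hgf : g ≠ f := fun h => hfT₀ (h ▸ hgT₀)
        simp only [if_neg hgf]
        obtain ⟨hm, hs, hx⟩ := hE₀ g hgT₀
        refine ⟨hm, hs, ?_⟩
        intro x hxg hxA
        obtain ⟨hxB0, hrest⟩ := hx x hxg hxA
        refine ⟨hxB0, ?_⟩
        intro g' hg' hne
        rcases Finset.mem_insert.mp hg' with rfl | hg'T₀
        · simp only [if_pos rfl]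
          intro hxe
          by_contra hxAf
          exact hegood x hxe hxAf (Finset.mem_union_right _
            (Finset.mem_biUnion.mpr ⟨g, hgT₀, Finset.mem_sdiff.mpr ⟨hxg, hxA⟩⟩))
        · have hne' : g' ≠ f := fun h => hfT₀ (h ▸ hg'T₀)
          simp only [if_neg hne']
          exact hrest g' hg'T₀ hne
  obtain ⟨E', hE'⟩ := key EF (Finset.Subset.refl _)
  -- build the expansion witness in G
  refine ⟨φ, fun g => E' g \ imφ, ?_, ?_, ?_, ?_⟩
  · intro a b hab
    have hfEF : s(a, b) ∈ EF := by rw [hEF, SimpleGraph.mem_edgeFinset]; exact hab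
    obtain ⟨hm, hs, hprop⟩ := hE' _ hfEF
    have hinter : E' s(a, b) ∩ imφ = {φ a, φ b} := by
      apply Finset.Subset.antisymm
      · intro x hx
        obtain ⟨hxE, hxim⟩ := Finset.mem_inter.mp hx
        by_cases hxA : x ∈ A s(a, b)
        · rcases hAim a b hab x hxA hxim with rfl | rfl <;> simp
        · exact absurd (Finset.mem_union_left _ hxim) (hprop x hxE hxA).1
      · intro x hx
        refine Finset.mem_inter.mpr ⟨?_, ?_⟩
        · apply hs
          rw [hAmk]
          rcases Finset.mem_insert.mp hx with rfl | hx
          · exact Finset.mem_insert_self _ _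
          · simp only [Finset.mem_singleton] at hx; subst hx
            exact Finset.mem_insert_of_mem (Finset.mem_insert_self _ _)
        · rcases Finset.mem_insert.mp hx with rfl | hx
          · exact Finset.mem_image_of_mem φ (Finset.mem_univ a)
          · simp only [Finset.mem_singleton] at hx; subst hx
            exact Finset.mem_image_of_mem φ (Finset.mem_univ b)
    have : (E' s(a, b) \ imφ).card = (E' s(a, b)).card - (E' s(a, b) ∩ imφ).card := by
      rw [← Finset.sdiff_inter_self_left (E' s(a, b)) imφ]
      exact Finset.card_sdiff_of_subset Finset.inter_subset_left
    rw [this, hinter, G.uniform _ hm,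
      Finset.card_insert_of_notMem (by simp [φ.injective.ne hab.ne]), Finset.card_singleton]
  · intro a b hab x hx hrange
    obtain ⟨c, rfl⟩ := hrange
    exact (Finset.mem_sdiff.mp hx).2 (Finset.mem_image_of_mem φ (Finset.mem_univ c))
  · intro f hf g hg hne
    have hfEF : f ∈ EF := by rwa [hEF, SimpleGraph.mem_edgeFinset]
    have hgEF : g ∈ EF := by rwa [hEF, SimpleGraph.mem_edgeFinset]
    rw [Finset.disjoint_left]
    intro x hxf hxg
    obtain ⟨hxEf, hxim⟩ := Finset.mem_sdiff.mp hxf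
    obtain ⟨hxEg, _⟩ := Finset.mem_sdiff.mp hxg
    obtain ⟨_, _, hpropf⟩ := hE' f hfEF
    obtain ⟨_, _, hpropg⟩ := hE' g hgEF
    by_cases hxAf : x ∈ A f
    · -- x ∈ S f since x ∉ imφ
      obtain ⟨a, b, hab, rfl⟩ := hedge f hfEF
      have hxSf : x ∈ S s(a, b) := by
        rw [hAmk] at hxAf
        rcases Finset.mem_insert.mp hxAf with rfl | hxAf
        · exact absurd (Finset.mem_image_of_mem φ (Finset.mem_univ a)) hxim
        rcases Finset.mem_insert.mp hxAf with rfl | hxAf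
        · exact absurd (Finset.mem_image_of_mem φ (Finset.mem_univ b)) hxim
        · exact hxAf
      by_cases hxAg : x ∈ A g
      · obtain ⟨a', b', hab', rfl⟩ := hedge g hgEF
        have hxSg : x ∈ S s(a', b') := by
          rw [hAmk] at hxAg
          rcases Finset.mem_insert.mp hxAg with rfl | hxAg
          · exact absurd (Finset.mem_image_of_mem φ (Finset.mem_univ a')) hxim
          rcases Finset.mem_insert.mp hxAg with rfl | hxAg
          · exact absurd (Finset.mem_image_of_mem φ (Finset.mem_univ b')) hxim
          · exact hxAg
        exact Finset.disjoint_left.mp (h3 _ hf _ hg hne) hxSf hxSg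
      · exact (hpropg x hxEg hxAg).1 (hSB0 _ hfEF hxSf)
    · have := (hpropf x hxEf hxAf).2 g hgEF (fun h => hne h.symm) hxEg
      exact (hpropf x hxEf hxAf).1 (hAB0 g hgEF this)
  · intro a b hab
    have hfEF : s(a, b) ∈ EF := by rw [hEF, SimpleGraph.mem_edgeFinset]; exact hab
    obtain ⟨hm, hs, hprop⟩ := hE' _ hfEF
    have hgoal : insert (φ a) (insert (φ b) (E' s(a, b) \ imφ)) = E' s(a, b) := by
      apply Finset.Subset.antisymm
      · intro x hx
        rcases Finset.mem_insert.mp hx with rfl | hx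
        · exact hs (by rw [hAmk]; exact Finset.mem_insert_self _ _)
        rcases Finset.mem_insert.mp hx with rfl | hx
        · exact hs (by rw [hAmk]; exact Finset.mem_insert_of_mem (Finset.mem_insert_self _ _))
        · exact (Finset.mem_sdiff.mp hx).1
      · intro x hx
        by_cases hxim : x ∈ imφ
        · by_cases hxA : x ∈ A s(a, b)
          · rcases hAim a b hab x hxA hxim with rfl | rfl
            · exact Finset.mem_insert_self _ _
            · exact Finset.mem_insert_of_mem (Finset.mem_insert_self _ _)
          · exact absurd (Finset.mem_union_left _ hxim) (hprop x hx hxA).1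
        · exact Finset.mem_insert_of_mem (Finset.mem_insert_of_mem
            (Finset.mem_sdiff.mpr ⟨hx, hxim⟩))
    rw [hgoal]
    exact hm
end
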